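/- arXiv:2502.10007 — 5 statements merged into one kernel-verified Lean document; each statement's English description precedes it below -/
import Mathlib

section
/- Let K be a field, V a finite-dimensional K-vector space, d ≥ 2, and f ∈ S^d V. Then prk_K(ι(f)) ≤ D·s_K(f), where D = binom(d, ⌊d/2⌋) and ι: S^d V → V^{⊗d} is the symmetrization map. -/
set_option linter.unusedSectionVars false

open PiTensorProduct
open scoped TensorProduct

section PartitionRank

variable (F : Type*) [Field F] {d : ℕ} (W : Fin d → Type*)
  [∀ i, AddCommGroup (W i)] [∀ i, Module F (W i)]

/-- Combine a family indexed by `I` and a family indexed by the complement of `I`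
into a family indexed by `Fin d`. -/
def combineVec (I : Finset (Fin d)) (v : ∀ i : {x : Fin d // x ∈ I}, W i)
    (w : ∀ i : {x : Fin d // x ∉ I}, W i) : ∀ i, W i :=
  fun i => if h : i ∈ I then v ⟨i, h⟩ else w ⟨i, h⟩

theorem combineVec_update_right (I : Finset (Fin d)) {instd : DecidableEq (Fin d)}
    {insts : DecidableEq {x : Fin d // x ∉ I}} (v : ∀ i : {x : Fin d // x ∈ I}, W i)
    (w : ∀ i : {x : Fin d // x ∉ I}, W i) (j : {x : Fin d // x ∉ I}) (x : W j) :
    combineVec W I v (Function.update w j x) =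
      Function.update (combineVec W I v w) (j : Fin d) x := by
  obtain ⟨jv, hj⟩ := j
  funext i
  rcases eq_or_ne i jv with rfl | hij
  · simp [combineVec, hj]
  · rw [Function.update_of_ne hij]
    by_cases h : i ∈ I
    · simp [combineVec, h]
    · have hne : (⟨i, h⟩ : {x : Fin d // x ∉ I}) ≠ ⟨jv, hj⟩ := by
        simpa [Subtype.ext_iff] using hij
      simp [combineVec, h, Function.update_of_ne hne]

theorem combineVec_update_left (I : Finset (Fin d)) {instd : DecidableEq (Fin d)}
    {insts : DecidableEq {x : Fin d // x ∈ I}} (v : ∀ i : {x : Fin d // x ∈ I}, W i)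
    (w : ∀ i : {x : Fin d // x ∉ I}, W i) (j : {x : Fin d // x ∈ I}) (x : W j) :
    combineVec W I (Function.update v j x) w =
      Function.update (combineVec W I v w) (j : Fin d) x := by
  obtain ⟨jv, hj⟩ := j
  funext i
  rcases eq_or_ne i jv with rfl | hij
  · simp [combineVec, hj]
  · rw [Function.update_of_ne hij]
    by_cases h : i ∈ I
    · have hne : (⟨i, h⟩ : {x : Fin d // x ∈ I}) ≠ ⟨jv, hj⟩ := by
        simpa [Subtype.ext_iff] using hij
      simp [combineVec, h, Function.update_of_ne hne]
    · simp [combineVec, h]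

/-- The inner multilinear map used to define the partition multiplication. -/
noncomputable def partMulInner (I : Finset (Fin d))
    (v : ∀ i : {x : Fin d // x ∈ I}, W i) :
    MultilinearMap F (fun i : {x : Fin d // x ∉ I} => W i) (⨂[F] i, W i) where
  toFun w := tprod F (combineVec W I v w)
  map_update_add' w j x y := by
    simp only [combineVec_update_right, MultilinearMap.map_update_add]
  map_update_smul' w j c x := by
    simp only [combineVec_update_right, MultilinearMap.map_update_smul]

/-- The outer multilinear map used to define the partition multiplication. -/
noncomputable def partMulOuter (I : Finset (Fin d)) :
    MultilinearMap F (fun i : {x : Fin d // x ∈ I} => W i)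
      ((⨂[F] i : {x : Fin d // x ∉ I}, W i) →ₗ[F] ⨂[F] i, W i) where
  toFun v := PiTensorProduct.lift (partMulInner F W I v)
  map_update_add' v j x y := by
    ext w
    simp [partMulInner, combineVec_update_left, MultilinearMap.map_update_add]
  map_update_smul' v j c x := by
    ext w
    simp [partMulInner, combineVec_update_left, MultilinearMap.map_update_smul]

/-- The canonical bilinear "partition multiplication"
`V_I ⊗ V_{I^c} → V₁ ⊗ ⋯ ⊗ V_d` realising the canonical isomorphism on pairs. -/
noncomputable def partMul (I : Finset (Fin d)) :
    (⨂[F] i : {x : Fin d // x ∈ I}, W i) →ₗ[F]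
      (⨂[F] i : {x : Fin d // x ∉ I}, W i) →ₗ[F] ⨂[F] i, W i :=
  PiTensorProduct.lift (partMulOuter F W I)

/-- Witnesses "partition rank at most `r`": a decomposition `t = Σ_{k=1}^r a_k ⊗ b_k`
with `a_k ∈ V_{I_k}`, `b_k ∈ V_{I_k^c}` for proper nonempty subsets `I_k ⊂ [d]`. -/
def PrkDecomp (t : ⨂[F] i, W i) (r : ℕ) : Prop :=
  ∃ I : Fin r → Finset (Fin d),
    (∀ k, (I k).Nonempty ∧ I k ≠ Finset.univ) ∧
    ∃ (a : ∀ k, ⨂[F] i : {x : Fin d // x ∈ I k}, W i)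
      (b : ∀ k, ⨂[F] i : {x : Fin d // x ∉ I k}, W i),
      t = ∑ k, partMul F W (I k) (a k) (b k)

/-- The partition rank of a tensor. -/
noncomputable def prk (t : ⨂[F] i, W i) : ℕ :=
  sInf {r | PrkDecomp F W t r}

/-- Witnesses "collective partition rank at most `r`" for a tuple of tensors: some
nonzero linear combination has partition rank at most `r`. -/
def CollectivePrkDecomp {m : ℕ} (t : Fin m → ⨂[F] i, W i) (r : ℕ) : Prop :=
  ∃ c : Fin m → F, c ≠ 0 ∧ PrkDecomp F W (∑ ℓ, c ℓ • t ℓ) r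

/-- The collective partition rank of a tuple of tensors. -/
noncomputable def collectivePrk {m : ℕ} (t : Fin m → ⨂[F] i, W i) : ℕ :=
  sInf {r | CollectivePrkDecomp F W t r}

end PartitionRank

section BaseChange

variable (K L : Type*) [Field K] [Field L] [Algebra K L]
variable {d : ℕ} (W : Fin d → Type*) [∀ i, AddCommGroup (W i)] [∀ i, Module K (W i)]

/-- The canonical `K`-linear map `V₁ ⊗ ⋯ ⊗ V_d → (L ⊗ V₁) ⊗_L ⋯ ⊗_L (L ⊗ V_d)`. -/
noncomputable def tensorBaseChange :
    (⨂[K] i, W i) →ₗ[K] ⨂[L] i, (L ⊗[K] W i) :=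
  PiTensorProduct.lift
    (((PiTensorProduct.tprod L (s := fun i => L ⊗[K] W i)).restrictScalars K).compLinearMap
      (fun i => TensorProduct.mk K L (W i) 1))

end BaseChange
section Border

/-- `x` lies in the Zariski closure of `S`: every polynomial function (pulled back along any
linear map to a coordinate space) that vanishes on `S` vanishes at `x`. -/
def MemZariskiClosure (F : Type*) [CommSemiring F] {W : Type*} [AddCommMonoid W] [Module F W]
    (S : Set W) (x : W) : Prop :=
  ∀ (N : ℕ) (φ : W →ₗ[F] (Fin N → F)) (P : MvPolynomial (Fin N) F),
    (∀ s ∈ S, MvPolynomial.eval (φ s) P = 0) → MvPolynomial.eval (φ x) P = 0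

variable (K : Type*) [Field K] {d : ℕ} (W : Fin d → Type*)
  [∀ i, AddCommGroup (W i)] [∀ i, Module K (W i)]

/-- The border partition rank of a tensor: the minimal `r` such that the tensor, viewed
over the algebraic closure, lies in the Zariski closure of the tensors of partition rank
at most `r`. -/
noncomputable def borderPrk (t : ⨂[K] i, W i) : ℕ :=
  sInf {r | MemZariskiClosure (AlgebraicClosure K)
    {s : ⨂[AlgebraicClosure K] i, (AlgebraicClosure K ⊗[K] W i) |
      PrkDecomp (AlgebraicClosure K) (fun i => AlgebraicClosure K ⊗[K] W i) s r}
    (tensorBaseChange K (AlgebraicClosure K) W t)}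

/-- The border collective partition rank of an `m`-tuple of tensors. -/
noncomputable def borderCollectivePrk {m : ℕ} (t : Fin m → ⨂[K] i, W i) : ℕ :=
  sInf {r | MemZariskiClosure (AlgebraicClosure K)
    {s : Fin m → ⨂[AlgebraicClosure K] i, (AlgebraicClosure K ⊗[K] W i) |
      CollectivePrkDecomp (AlgebraicClosure K) (fun i => AlgebraicClosure K ⊗[K] W i) s r}
    (fun ℓ => tensorBaseChange K (AlgebraicClosure K) W (t ℓ))}

end Border

section PiIota

variable (K : Type*) [Field K] {n : ℕ} {V : Type*} [AddCommGroup V] [Module K V]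

/-- The linear form in `K[x₁,…,xₙ]` associated to a vector of `V` via a basis. -/
noncomputable def linearFormOf (b : Module.Basis (Fin n) K V) : V →ₗ[K] MvPolynomial (Fin n) K :=
  (Finsupp.linearCombination K fun j => (MvPolynomial.X j : MvPolynomial (Fin n) K)) ∘ₗ
    b.repr.toLinearMap

/-- The multiplication map `π : V^{⊗d} → S^d V`, `v₁ ⊗ ⋯ ⊗ v_d ↦ v₁⋯v_d`, where `S^d V` is
realised as the space of degree-`d` forms in `K[x₁,…,xₙ]` via the basis `b`. -/
noncomputable def tensorToPoly (b : Module.Basis (Fin n) K V) (d : ℕ) :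
    (⨂[K] _ : Fin d, V) →ₗ[K] MvPolynomial (Fin n) K :=
  PiTensorProduct.lift
    ((MultilinearMap.mkPiAlgebra K (Fin d) (MvPolynomial (Fin n) K)).compLinearMap
      (fun _ => linearFormOf K b))

/-- The symmetrisation map `ι : S^d V → V^{⊗d}`,
`v₁⋯v_d ↦ Σ_{σ ∈ S_d} v_{σ(1)} ⊗ ⋯ ⊗ v_{σ(d)}`, where `S^d V` is realised as the space of
degree-`d` forms in `K[x₁,…,xₙ]` via the basis `b`. -/
noncomputable def polyToTensor (b : Module.Basis (Fin n) K V) (d : ℕ) :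
    MvPolynomial (Fin n) K →ₗ[K] ⨂[K] _ : Fin d, V :=
  ∑ w : Fin d → Fin n,
    (∏ j : Fin n, Nat.factorial ((∑ i : Fin d, Finsupp.single (w i) 1 : Fin n →₀ ℕ) j)) •
      ((LinearMap.toSpanSingleton K _ (PiTensorProduct.tprod K fun i => b (w i))) ∘ₗ
        (MvPolynomial.lcoeff K (∑ i : Fin d, Finsupp.single (w i) 1)))

end PiIota

section Coords

variable (F : Type*) [Field F]

/-- The standard coordinate on `(Fⁿ)^{⊗d}` indexed by the word `w`, i.e. the coefficient
of the basis vector `e_{w 0} ⊗ ⋯ ⊗ e_{w (d-1)}`. -/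
noncomputable def stdCoord (d n : ℕ) (w : Fin d → Fin n) :
    (⨂[F] _ : Fin d, (Fin n → F)) →ₗ[F] F :=
  PiTensorProduct.lift
    ((MultilinearMap.mkPiAlgebra F (Fin d) F).compLinearMap
      (fun i => LinearMap.proj (w i)))

end Coords

/-- A decomposition of `f` as a sum of `r` products of pairs of homogeneous polynomials
of positive degree; witnesses "strength at most `r`". -/
def StrengthDecomp {K : Type*} [CommSemiring K] {σ : Type*}
    (f : MvPolynomial σ K) (r : ℕ) : Prop :=
  ∃ (a b : Fin r → MvPolynomial σ K) (da db : Fin r → ℕ),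
    (∀ i, 0 < da i ∧ 0 < db i ∧ (a i).IsHomogeneous (da i) ∧ (b i).IsHomogeneous (db i)) ∧
    f = ∑ i, a i * b i

/-- The strength of a polynomial: the minimal number of terms in a decomposition as a
sum of products of homogeneous polynomials of positive degree. -/
noncomputable def strength {K : Type*} [CommSemiring K] {σ : Type*}
    (f : MvPolynomial σ K) : ℕ :=
  sInf {r | StrengthDecomp f r}


section Aux

set_option maxRecDepth 40000

open MvPolynomial

variable {K : Type*} [Field K] {V : Type*} [AddCommGroup V] [Module K V] {n d : ℕ}

/-- The exponent multiset (as a finsupp) of a word. -/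
noncomputable def wordFinsupp {ι : Type*} [Fintype ι] {n : ℕ} (u : ι → Fin n) : Fin n →₀ ℕ :=
  ∑ i : ι, Finsupp.single (u i) 1

/-- The analogue of `polyToTensor` for an arbitrary finite index type. -/
noncomputable def subT (K : Type*) [Field K] (V : Type*) [AddCommGroup V] [Module K V]
    {n : ℕ} (b : Module.Basis (Fin n) K V) (ι : Type*) [Fintype ι] [DecidableEq ι] :
    MvPolynomial (Fin n) K →ₗ[K] ⨂[K] _ : ι, V :=
  ∑ u : ι → Fin n,
    (∏ j : Fin n, Nat.factorial ((wordFinsupp u) j)) •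
      ((LinearMap.toSpanSingleton K _ (PiTensorProduct.tprod K fun i => b (u i))) ∘ₗ
        (MvPolynomial.lcoeff K (wordFinsupp u)))

lemma polyToTensor_eq_subT (b : Module.Basis (Fin n) K V) (d : ℕ) :
    polyToTensor K b d = subT K V b (Fin d) := rfl

lemma wordFinsupp_apply {ι : Type*} [Fintype ι] [DecidableEq (Fin n)] (u : ι → Fin n) (j : Fin n) :
    wordFinsupp u j = (Finset.univ.filter fun i => u i = j).card := by
  rw [Finset.card_filter]
  show (∑ i : ι, Finsupp.single (u i) 1) j = _
  rw [Finsupp.finset_sum_apply]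
  exact Finset.sum_congr rfl fun i _ => by rw [Finsupp.single_apply]

lemma wordFinsupp_subtype_mem (S : Finset (Fin d)) (w : Fin d → Fin n) :
    wordFinsupp (fun i : {x : Fin d // x ∈ S} => w i) = ∑ i ∈ S, Finsupp.single (w i) 1 := by
  show ∑ i : {x : Fin d // x ∈ S}, Finsupp.single (w i) 1 = _
  exact Finset.sum_coe_sort S (fun i => Finsupp.single (w i) 1)

lemma wordFinsupp_subtype_not_mem (S : Finset (Fin d)) (w : Fin d → Fin n) :
    wordFinsupp (fun i : {x : Fin d // x ∉ S} => w i) = ∑ i ∈ Sᶜ, Finsupp.single (w i) 1 := by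
  show ∑ i : {x : Fin d // x ∉ S}, Finsupp.single (w i) 1 = _
  exact (Finset.sum_subtype Sᶜ (fun x => Finset.mem_compl) (fun i => Finsupp.single (w i) 1)).symm

lemma degree_wordFinsupp {ι : Type*} [Fintype ι] (u : ι → Fin n) :
    (wordFinsupp u).degree = Fintype.card ι := by
  classical
  rw [Finsupp.degree_apply, Finset.sum_subset (Finset.subset_univ _)
    (fun j _ hj => Finsupp.notMem_support_iff.mp hj)]
  have : ∀ j : Fin n, wordFinsupp u j = ∑ i : ι, if u i = j then 1 else 0 := by
    intro j
    show (∑ i : ι, Finsupp.single (u i) 1) j = _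
    rw [Finsupp.finset_sum_apply]
    exact Finset.sum_congr rfl fun i _ => by rw [Finsupp.single_apply]
  simp only [this]
  rw [Finset.sum_comm]
  simp

lemma card_filter_sum_single (w : Fin d → Fin n) (α : Fin n →₀ ℕ) :
    (Finset.univ.filter fun S : Finset (Fin d) =>
        (∑ i ∈ S, Finsupp.single (w i) 1) = α).card
      = ∏ j, ((wordFinsupp w) j).choose (α j) := by
  classical
  have hcard : ∀ (S : Finset (Fin d)) (j : Fin n),
      ((S.filter fun i => w i = j)).card = (∑ i ∈ S, Finsupp.single (w i) 1) j := by
    intro S j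
    rw [Finset.card_filter, Finsupp.finset_sum_apply]
    exact Finset.sum_congr rfl fun i _ => by rw [Finsupp.single_apply]
  have hFj : ∀ (F : Fin n → Finset (Fin d)),
      (∀ j, F j ⊆ Finset.univ.filter fun i => w i = j) →
      ∀ j, (Finset.univ.filter fun i => i ∈ F (w i)).filter (fun i => w i = j) = F j := by
    intro F hF j
    ext i
    simp only [Finset.mem_filter, Finset.mem_univ, true_and]
    constructor
    · rintro ⟨h1, rfl⟩; exact h1
    · intro h
      have hw : w i = j := (Finset.mem_filter.mp (hF j h)).2
      exact ⟨by rw [hw]; exact h, hw⟩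
  have hbij : (Finset.univ.filter fun S : Finset (Fin d) =>
        (∑ i ∈ S, Finsupp.single (w i) 1) = α).card
      = (Fintype.piFinset fun j =>
          Finset.powersetCard (α j) (Finset.univ.filter fun i => w i = j)).card := by
    apply Finset.card_bij' (i := fun S _ => fun j => S.filter fun i => w i = j)
      (j := fun F _ => Finset.univ.filter fun i => i ∈ F (w i))
    · intro S hS
      rw [Finset.mem_filter] at hS
      rw [Fintype.mem_piFinset]
      intro j
      rw [Finset.mem_powersetCard]
      exact ⟨Finset.filter_subset_filter _ (Finset.subset_univ S), by rw [hcard, hS.2]⟩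
    · intro F hF
      rw [Fintype.mem_piFinset] at hF
      have hsub : ∀ j, F j ⊆ Finset.univ.filter fun i => w i = j :=
        fun j => (Finset.mem_powersetCard.mp (hF j)).1
      rw [Finset.mem_filter]
      refine ⟨Finset.mem_univ _, ?_⟩
      ext j
      rw [← hcard, hFj F hsub j]
      exact (Finset.mem_powersetCard.mp (hF j)).2
    · intro S hS
      ext i
      simp
    · intro F hF
      rw [Fintype.mem_piFinset] at hF
      have hsub : ∀ j, F j ⊆ Finset.univ.filter fun i => w i = j :=
        fun j => (Finset.mem_powersetCard.mp (hF j)).1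
      funext j
      exact hFj F hsub j
  rw [hbij, Fintype.card_piFinset]
  exact Finset.prod_congr rfl fun j _ => by
    rw [Finset.card_powersetCard, wordFinsupp_apply]

end Aux


section Aux2

set_option maxRecDepth 40000

open MvPolynomial

variable {K : Type*} [Field K] {V : Type*} [AddCommGroup V] [Module K V] {n d : ℕ}

lemma partMul_tprod (I : Finset (Fin d)) (v : ∀ _ : {x : Fin d // x ∈ I}, V)
    (w : ∀ _ : {x : Fin d // x ∉ I}, V) :
    partMul K (fun _ : Fin d => V) I (PiTensorProduct.tprod K v) (PiTensorProduct.tprod K w)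
      = PiTensorProduct.tprod K (combineVec (fun _ : Fin d => V) I v w) := by
  simp [partMul, partMulOuter, partMulInner, PiTensorProduct.lift.tprod]

lemma combineVec_same (S : Finset (Fin d)) (b : Module.Basis (Fin n) K V) (w : Fin d → Fin n) :
    combineVec (fun _ : Fin d => V) S (fun i : {x : Fin d // x ∈ S} => b (w i))
      (fun i : {x : Fin d // x ∉ S} => b (w i)) = fun i => b (w i) := by
  funext i
  by_cases h : i ∈ S <;> simp [combineVec, h]

lemma subT_apply (b : Module.Basis (Fin n) K V) (ι : Type*) [Fintype ι] [DecidableEq ι]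
    (p : MvPolynomial (Fin n) K) :
    subT K V b ι p = ∑ u : ι → Fin n,
      (((∏ j : Fin n, Nat.factorial ((wordFinsupp u) j) : ℕ) : K) * coeff (wordFinsupp u) p) •
        PiTensorProduct.tprod K (fun i => b (u i)) := by
  rw [subT, LinearMap.sum_apply]
  refine Finset.sum_congr rfl fun u _ => ?_
  show (∏ j : Fin n, Nat.factorial ((wordFinsupp u) j)) •
      ((LinearMap.toSpanSingleton K _ (PiTensorProduct.tprod K fun i => b (u i)))
        ((MvPolynomial.lcoeff K (wordFinsupp u)) p)) = _
  rw [lcoeff_apply, LinearMap.toSpanSingleton_apply, mul_smul, Nat.cast_smul_eq_nsmul]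

lemma subT_monomial (b : Module.Basis (Fin n) K V) (ι : Type*) [Fintype ι] [DecidableEq ι]
    (γ : Fin n →₀ ℕ) (c : K) :
    subT K V b ι (monomial γ c) = ∑ u : ι → Fin n,
      (if wordFinsupp u = γ then ((∏ j : Fin n, Nat.factorial (γ j) : ℕ) : K) * c else 0) •
        PiTensorProduct.tprod K (fun i => b (u i)) := by
  classical
  rw [subT_apply]
  refine Finset.sum_congr rfl fun u _ => ?_
  rw [coeff_monomial]
  rcases eq_or_ne (wordFinsupp u) γ with h | h
  · rw [if_pos h.symm, if_pos h, h]
  · rw [if_neg (Ne.symm h), if_neg h, mul_zero]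

lemma subT_eq_zero (b : Module.Basis (Fin n) K V) (ι : Type*) [Fintype ι] [DecidableEq ι]
    {p : MvPolynomial (Fin n) K} {e : ℕ} (hp : p.IsHomogeneous e)
    (h : Fintype.card ι ≠ e) :
    subT K V b ι p = 0 := by
  rw [subT_apply]
  refine Finset.sum_eq_zero fun u _ => ?_
  rw [hp.coeff_eq_zero (by rw [degree_wordFinsupp]; exact h), mul_zero, zero_smul]

end Aux2


section Aux3

set_option maxRecDepth 40000
set_option maxHeartbeats 1600000

open MvPolynomial

variable {K : Type*} [Field K] {V : Type*} [AddCommGroup V] [Module K V] {n d : ℕ}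

lemma sum_pair_subtype (S : Finset (Fin d)) {M : Type*} [AddCommMonoid M]
    (G : ({x : Fin d // x ∈ S} → Fin n) → ({x : Fin d // x ∉ S} → Fin n) → M) :
    (∑ u : {x : Fin d // x ∈ S} → Fin n, ∑ v : {x : Fin d // x ∉ S} → Fin n, G u v)
      = ∑ w : Fin d → Fin n, G (fun i => w i) (fun i => w i) := by
  refine Eq.symm ?_
  calc ∑ w : Fin d → Fin n, G (fun i => w i) (fun i => w i)
      = ∑ p : ({x : Fin d // x ∈ S} → Fin n) × ({x : Fin d // x ∉ S} → Fin n), G p.1 p.2 :=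
        Fintype.sum_equiv
          (Equiv.piEquivPiSubtypeProd (fun x : Fin d => x ∈ S) (fun _ : Fin d => Fin n)) _ _
          (fun w => rfl)
    _ = ∑ u : {x : Fin d // x ∈ S} → Fin n, ∑ v : {x : Fin d // x ∉ S} → Fin n, G u v :=
      Fintype.sum_prod_type _

lemma key_monomial (b : Module.Basis (Fin n) K V) (α β : Fin n →₀ ℕ) (c c' : K) :
    polyToTensor K b d (monomial α c * monomial β c') =
      ∑ S : Finset (Fin d),
        partMul K (fun _ : Fin d => V) S
          (subT K V b {x : Fin d // x ∈ S} (monomial α c))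
          (subT K V b {x : Fin d // x ∉ S} (monomial β c')) := by
  classical
  have hS : ∀ S : Finset (Fin d),
      partMul K (fun _ : Fin d => V) S
          (subT K V b {x : Fin d // x ∈ S} (monomial α c))
          (subT K V b {x : Fin d // x ∉ S} (monomial β c'))
        = ∑ w : Fin d → Fin n,
            ((if (∑ i ∈ S, Finsupp.single (w i) 1) = α
                then ((∏ j : Fin n, Nat.factorial (α j) : ℕ) : K) * c else 0) *
             (if (∑ i ∈ Sᶜ, Finsupp.single (w i) 1) = β
                then ((∏ j : Fin n, Nat.factorial (β j) : ℕ) : K) * c' else 0)) •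
              PiTensorProduct.tprod K (fun i => b (w i)) := by
    intro S
    rw [subT_monomial, subT_monomial]
    simp only [map_sum, map_smul, LinearMap.sum_apply, LinearMap.smul_apply, Finset.smul_sum,
      partMul_tprod, smul_smul]
    rw [Finset.sum_comm, sum_pair_subtype]
    simp only [wordFinsupp_subtype_mem, wordFinsupp_subtype_not_mem, combineVec_same]
    exact Finset.sum_congr rfl fun w _ => by rw [mul_comm]
  rw [monomial_mul, polyToTensor_eq_subT, subT_monomial,
    Finset.sum_congr rfl (fun S _ => hS S), Finset.sum_comm]
  refine Finset.sum_congr rfl fun w _ => ?_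
  rw [← Finset.sum_smul]
  congr 1
  simp only [ite_zero_mul_ite_zero]
  have hAB : ∀ S : Finset (Fin d),
      (∑ i ∈ S, Finsupp.single (w i) 1) + (∑ i ∈ Sᶜ, Finsupp.single (w i) 1)
        = wordFinsupp w := fun S => Finset.sum_add_sum_compl S _
  have hiff : ∀ S : Finset (Fin d),
      ((∑ i ∈ S, Finsupp.single (w i) 1) = α ∧ (∑ i ∈ Sᶜ, Finsupp.single (w i) 1) = β) ↔
        ((∑ i ∈ S, Finsupp.single (w i) 1) = α ∧ wordFinsupp w = α + β) := by
    intro S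
    constructor
    · rintro ⟨h1, h2⟩
      exact ⟨h1, by rw [← hAB S, h1, h2]⟩
    · rintro ⟨h1, h2⟩
      refine ⟨h1, ?_⟩
      have h3 := hAB S
      rw [h1, h2] at h3
      exact add_left_cancel h3
  rw [Finset.sum_congr rfl fun S _ => if_congr (hiff S) rfl rfl]
  by_cases hw : wordFinsupp w = α + β
  · have hcf : ∀ x y : ℕ, (x + y).choose x * (x.factorial * y.factorial) = (x + y).factorial := by
      intro x y
      have h := Nat.add_choose_mul_factorial_mul_factorial y x
      rw [add_comm y x] at h
      calc (x + y).choose x * (x.factorial * y.factorial)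
          = (x + y).choose x * y.factorial * x.factorial := by ring
        _ = (x + y).factorial := h
    have hnat : (∏ j : Fin n, (α j + β j).choose (α j)) *
        ((∏ j : Fin n, (α j).factorial) * (∏ j : Fin n, (β j).factorial))
        = ∏ j : Fin n, (α j + β j).factorial := by
      rw [← Finset.prod_mul_distrib, ← Finset.prod_mul_distrib]
      exact Finset.prod_congr rfl fun j _ => hcf (α j) (β j)
    simp only [hw, and_true, eq_self_iff_true, if_true, Finsupp.add_apply]
    rw [Finset.sum_ite, Finset.sum_const, Finset.sum_const_zero, add_zero,
      card_filter_sum_single w α, hw]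
    simp only [Finsupp.add_apply]
    rw [nsmul_eq_mul, ← hnat]
    push_cast
    ring
  · simp [hw]
  
lemma keyIdentity (b : Module.Basis (Fin n) K V) (p q : MvPolynomial (Fin n) K) :
    polyToTensor K b d (p * q) =
      ∑ S : Finset (Fin d),
        partMul K (fun _ : Fin d => V) S
          (subT K V b {x : Fin d // x ∈ S} p)
          (subT K V b {x : Fin d // x ∉ S} q) := by
  classical
  induction p using MvPolynomial.induction_on' with
  | monomial α c =>
    induction q using MvPolynomial.induction_on' with
    | monomial β c' => exact key_monomial b α β c c'
    | add q1 q2 hq1 hq2 =>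
      rw [mul_add, map_add, hq1, hq2, ← Finset.sum_add_distrib]
      exact Finset.sum_congr rfl fun S _ => by rw [map_add, map_add]
  | add p1 p2 hp1 hp2 =>
    rw [add_mul, map_add, hp1, hp2, ← Finset.sum_add_distrib]
    exact Finset.sum_congr rfl fun S _ => by rw [map_add, map_add, LinearMap.add_apply]

end Aux3


section Aux4

set_option maxRecDepth 40000
set_option maxHeartbeats 1600000

open MvPolynomial

section PrkMachinery

variable (F : Type*) [Field F] {d : ℕ} (W : Fin d → Type*)
  [∀ i, AddCommGroup (W i)] [∀ i, Module F (W i)]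

/-- A tensor is a "partition term" if it is `partMul` of a proper nonempty subset. -/
def IsPartTerm (x : ⨂[F] i, W i) : Prop :=
  ∃ I : Finset (Fin d), (I.Nonempty ∧ I ≠ Finset.univ) ∧
    ∃ (a : ⨂[F] i : {x : Fin d // x ∈ I}, W i) (b : ⨂[F] i : {x : Fin d // x ∉ I}, W i),
      x = partMul F W I a b

lemma prkDecomp_iff (t : ⨂[F] i, W i) (r : ℕ) :
    PrkDecomp F W t r ↔ ∃ g : Fin r → ⨂[F] i, W i,
      (∀ k, IsPartTerm F W (g k)) ∧ t = ∑ k, g k := by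
  constructor
  · rintro ⟨I, hI, a, b, rfl⟩
    exact ⟨fun k => partMul F W (I k) (a k) (b k),
      fun k => ⟨I k, hI k, a k, b k, rfl⟩, rfl⟩
  · rintro ⟨g, hg, rfl⟩
    choose I hI a b hterm using hg
    exact ⟨I, hI, a, b, Finset.sum_congr rfl fun k _ => hterm k⟩

lemma prkDecomp_zero : PrkDecomp F W 0 0 :=
  (prkDecomp_iff F W 0 0).mpr ⟨fun k => k.elim0, fun k => k.elim0, by simp⟩

lemma prkDecomp_add {t s : ⨂[F] i, W i} {r r' : ℕ}
    (h : PrkDecomp F W t r) (h' : PrkDecomp F W s r') :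
    PrkDecomp F W (t + s) (r + r') := by
  rw [prkDecomp_iff] at h h' ⊢
  obtain ⟨g, hg, rfl⟩ := h
  obtain ⟨g', hg', rfl⟩ := h'
  refine ⟨Fin.addCases g g', fun k => ?_, ?_⟩
  · refine Fin.addCases (motive := fun k => IsPartTerm F W (Fin.addCases g g' k))
      (fun i => ?_) (fun i => ?_) k
    · simpa using hg i
    · simpa using hg' i
  · rw [Fin.sum_univ_add]
    simp only [Fin.addCases_left, Fin.addCases_right]

lemma prkDecomp_single (I : Finset (Fin d)) (h1 : I.Nonempty) (h2 : I ≠ Finset.univ)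
    (a : ⨂[F] i : {x : Fin d // x ∈ I}, W i) (b : ⨂[F] i : {x : Fin d // x ∉ I}, W i) :
    PrkDecomp F W (partMul F W I a b) 1 :=
  (prkDecomp_iff F W _ 1).mpr ⟨fun _ => partMul F W I a b,
    fun _ => ⟨I, ⟨h1, h2⟩, a, b, rfl⟩, by rw [Fin.sum_univ_one]⟩

lemma prkDecomp_sum {κ : Type*} [DecidableEq κ] (A : Finset κ) (t : κ → ⨂[F] i, W i)
    (c : κ → ℕ) (h : ∀ i ∈ A, PrkDecomp F W (t i) (c i)) :
    PrkDecomp F W (∑ i ∈ A, t i) (∑ i ∈ A, c i) := by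
  induction A using Finset.induction_on with
  | empty => simpa using prkDecomp_zero F W
  | @insert a s ha ih =>
    rw [Finset.sum_insert ha, Finset.sum_insert ha]
    exact prkDecomp_add F W (h a (Finset.mem_insert_self a s))
      (ih fun i hi => h i (Finset.mem_insert_of_mem hi))

end PrkMachinery

variable {K : Type*} [Field K] {V : Type*} [AddCommGroup V] [Module K V] {n d : ℕ}

lemma prkDecomp_mul (b : Module.Basis (Fin n) K V) {p q : MvPolynomial (Fin n) K} {e e' : ℕ}
    (he : 0 < e) (he' : 0 < e') (hee : e + e' = d)
    (hp : p.IsHomogeneous e) (hq : q.IsHomogeneous e') :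
    PrkDecomp K (fun _ : Fin d => V) (polyToTensor K b d (p * q)) (d.choose e) := by
  classical
  rw [keyIdentity b p q]
  have hvanish : ∀ S : Finset (Fin d),
      S ∉ Finset.univ.filter (fun S : Finset (Fin d) => S.card = e) →
      partMul K (fun _ : Fin d => V) S (subT K V b {x : Fin d // x ∈ S} p)
        (subT K V b {x : Fin d // x ∉ S} q) = 0 := by
    intro S hS
    rw [Finset.mem_filter] at hS
    have hcard : Fintype.card {x : Fin d // x ∈ S} ≠ e := by
      rw [Fintype.card_coe]
      exact fun h => hS ⟨Finset.mem_univ _, h⟩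
    rw [subT_eq_zero b _ hp hcard, map_zero, LinearMap.zero_apply]
  rw [← Finset.sum_subset (Finset.subset_univ _) (fun S _ hS => hvanish S hS)]
  have hcount : d.choose e
      = ∑ _S ∈ Finset.univ.filter (fun S : Finset (Fin d) => S.card = e), 1 := by
    rw [Finset.sum_const, smul_eq_mul, mul_one, ← Finset.powerset_univ,
      ← Finset.powersetCard_eq_filter, Finset.card_powersetCard, Finset.card_univ,
      Fintype.card_fin]
  rw [hcount]
  refine prkDecomp_sum K (fun _ : Fin d => V) _ _ _ fun S hS => ?_
  rw [Finset.mem_filter] at hS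
  have h1 : S.Nonempty := Finset.card_pos.mp (by rw [hS.2]; exact he)
  have h2 : S ≠ Finset.univ := by
    intro h
    rw [h, Finset.card_univ, Fintype.card_fin] at hS
    have := hS.2
    omega
  exact prkDecomp_single K (fun _ : Fin d => V) S h1 h2 _ _

lemma strengthDecomp_exists {f : MvPolynomial (Fin n) K} {d : ℕ} (hd : 2 ≤ d)
    (hf : f.IsHomogeneous d) : StrengthDecomp f f.support.card := by
  classical
  have hdegU : ∀ x : Fin n →₀ ℕ, x.degree = ∑ j : Fin n, x j := fun x => by
    rw [Finsupp.degree_apply, Finset.sum_subset (Finset.subset_univ _)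
      (fun j _ hj => Finsupp.notMem_support_iff.mp hj)]
  have hdegadd : ∀ x y : Fin n →₀ ℕ, (x + y).degree = x.degree + y.degree := fun x y => by
    rw [hdegU, hdegU, hdegU, ← Finset.sum_add_distrib]
    exact Finset.sum_congr rfl fun j _ => rfl
  have hdegsingle : ∀ j : Fin n, (Finsupp.single j 1 : Fin n →₀ ℕ).degree = 1 := fun j => by
    rw [hdegU]
    simp [Finsupp.single_apply]
  have hdeg : ∀ m ∈ f.support, (m : Fin n →₀ ℕ).degree = d := fun m hm => by
    have := hf (mem_support_iff.mp hm)
    rwa [Finsupp.degree_eq_weight_one]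
  set N := f.support.card with hN
  set E := f.support.equivFin with hE
  set m : Fin N → (Fin n →₀ ℕ) := fun i => (E.symm i : Fin n →₀ ℕ) with hm
  have hmem : ∀ i, m i ∈ f.support := fun i => (E.symm i).2
  have hvar : ∀ i, ∃ j, m i j ≠ 0 := by
    intro i
    by_contra h
    push_neg at h
    have hz : m i = 0 := Finsupp.ext fun j => h j
    have := hdeg (m i) (hmem i)
    rw [hz, map_zero] at this
    omega
  set j : Fin N → Fin n := fun i => (hvar i).choose with hj
  have hjne : ∀ i, m i (j i) ≠ 0 := fun i => (hvar i).choose_spec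
  have hle : ∀ i, Finsupp.single (j i) 1 ≤ m i := fun i =>
    Finsupp.single_le_iff.mpr (Nat.one_le_iff_ne_zero.mpr (hjne i))
  have hadd : ∀ i, Finsupp.single (j i) 1 + (m i - Finsupp.single (j i) 1) = m i :=
    fun i => add_tsub_cancel_of_le (hle i)
  have hdm : ∀ i, (m i - Finsupp.single (j i) 1).degree = d - 1 := by
    intro i
    have h1 : (Finsupp.single (j i) 1 + (m i - Finsupp.single (j i) 1)).degree = d := by
      rw [hadd i]; exact hdeg (m i) (hmem i)
    rw [hdegadd, hdegsingle] at h1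
    omega
  refine ⟨fun i => X (j i), fun i => monomial (m i - Finsupp.single (j i) 1) (coeff (m i) f),
    fun _ => 1, fun _ => d - 1, fun i => ⟨one_pos, show 0 < d - 1 by omega, isHomogeneous_X K (j i),
      isHomogeneous_monomial _ (hdm i)⟩, ?_⟩
  have hterm : ∀ i, X (j i) * monomial (m i - Finsupp.single (j i) 1) (coeff (m i) f)
      = monomial (m i) (coeff (m i) f) := by
    intro i
    rw [show (X (j i) : MvPolynomial (Fin n) K) = monomial (Finsupp.single (j i) 1) 1 from rfl,
      monomial_mul, one_mul, hadd i]
  rw [Finset.sum_congr rfl fun i _ => hterm i]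
  calc f = ∑ m' ∈ f.support, monomial m' (coeff m' f) := (support_sum_monomial_coeff f).symm
    _ = ∑ m' : {x // x ∈ f.support}, monomial (m' : Fin n →₀ ℕ) (coeff m' f) :=
        (Finset.sum_coe_sort f.support _).symm
    _ = ∑ i : Fin N, monomial (m i) (coeff (m i) f) :=
        (Equiv.sum_comp E.symm fun m' : {x // x ∈ f.support} =>
          monomial (m' : Fin n →₀ ℕ) (coeff m' f)).symm

end Aux4


/-- Let `K` be a field, `V` a finite-dimensional `K`-vector space (with a
basis `b` indexed by `Fin n`), `d ≥ 2`, and `f ∈ S^d V`. Then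
`prk_K(ι(f)) ≤ binom(d, ⌊d/2⌋) · s_K(f)`, where `ι : S^d V → V^{⊗d}` is the
symmetrisation map. -/
theorem prk_polyToTensor_le_choose_mul_strength (K : Type*) [Field K] (V : Type*)
    [AddCommGroup V] [Module K V] (n d : ℕ) (hd : 2 ≤ d) (b : Module.Basis (Fin n) K V)
    (f : MvPolynomial (Fin n) K) (hf : f.IsHomogeneous d) :
    prk K (fun _ : Fin d => V) (polyToTensor K b d f) ≤
      Nat.choose d (d / 2) * strength f := by
  classical
  have hne : {r | StrengthDecomp f r}.Nonempty :=
    ⟨f.support.card, strengthDecomp_exists hd hf⟩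
  have hsd : StrengthDecomp f (strength f) := Nat.sInf_mem hne
  obtain ⟨r, hr⟩ : ∃ r, strength f = r := ⟨_, rfl⟩
  rw [hr] at hsd
  rw [hr]
  obtain ⟨a, bb, da, db, hcond, hsum⟩ := hsd
  set T := Finset.univ.filter (fun i : Fin r => d = da i + db i) with hT
  have hfT : f = ∑ i ∈ T, a i * bb i := by
    have h1 : (MvPolynomial.homogeneousComponent d) f = f := by
      rw [MvPolynomial.homogeneousComponent_of_mem
        ((MvPolynomial.mem_homogeneousSubmodule _ _).mpr hf), if_pos rfl]
    calc f = MvPolynomial.homogeneousComponent d f := h1.symm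
      _ = ∑ i : Fin r, MvPolynomial.homogeneousComponent d (a i * bb i) := by
          conv_lhs => rw [hsum]
          rw [map_sum]
      _ = ∑ i ∈ T, a i * bb i := by
          rw [hT, Finset.sum_filter]
          refine Finset.sum_congr rfl fun i _ => ?_
          have hhom := ((hcond i).2.2.1).mul ((hcond i).2.2.2)
          rw [MvPolynomial.homogeneousComponent_of_mem
            ((MvPolynomial.mem_homogeneousSubmodule _ _).mpr hhom)]
  have hQ : PrkDecomp K (fun _ : Fin d => V) (polyToTensor K b d f)
      (∑ i ∈ T, d.choose (da i)) := by
    rw [hfT, map_sum]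
    refine prkDecomp_sum K (fun _ : Fin d => V) T _ _ fun i hi => ?_
    rw [hT, Finset.mem_filter] at hi
    exact prkDecomp_mul b (hcond i).1 (hcond i).2.1 hi.2.symm (hcond i).2.2.1 (hcond i).2.2.2
  calc prk K (fun _ : Fin d => V) (polyToTensor K b d f)
      ≤ ∑ i ∈ T, d.choose (da i) := Nat.sInf_le hQ
    _ ≤ ∑ _i ∈ T, d.choose (d / 2) :=
        Finset.sum_le_sum fun i _ => Nat.choose_le_middle _ _
    _ = T.card * d.choose (d / 2) := by rw [Finset.sum_const, smul_eq_mul]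
    _ ≤ r * d.choose (d / 2) :=
        Nat.mul_le_mul_right _ (le_trans (Finset.card_filter_le _ _) (by simp))
    _ = d.choose (d / 2) * r := mul_comm _ _
end

section
/- Let K be a field and f ∈ K[x₁,…,xₙ] a form of degree d ≥ 2. Let L be a field extension of K with e := [L:K] < ∞. Then s_K(f) ≤ e · s_L(f). -/
open MvPolynomial

/-- The border strength of a degree-`d` form `f` over `K`: the minimal `r` such that `f`,
viewed over the algebraic closure, lies in the Zariski closure of the set of degree-`d`
forms of strength at most `r`. -/
noncomputable def borderStrength (K : Type*) [Field K] {σ : Type*} (d : ℕ)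
    (f : MvPolynomial σ K) : ℕ :=
  sInf {r | MemZariskiClosure (AlgebraicClosure K)
    {g : MvPolynomial σ (AlgebraicClosure K) | g.IsHomogeneous d ∧ StrengthDecomp g r}
    (MvPolynomial.map (algebraMap K (AlgebraicClosure K)) f)}


noncomputable def pimap {K L : Type*} [CommSemiring K] [CommSemiring L] [Module K L] {σ : Type*}
    (π : L →ₗ[K] K) (p : MvPolynomial σ L) : MvPolynomial σ K :=
  AddMonoidAlgebra.ofCoeff (Finsupp.mapRange π (map_zero π) (AddMonoidAlgebra.coeff p))

theorem coeff_pimap {K L : Type*} [CommSemiring K] [CommSemiring L] [Module K L] {σ : Type*}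
    (π : L →ₗ[K] K) (p : MvPolynomial σ L) (α : σ →₀ ℕ) :
    coeff α (pimap π p) = π (coeff α p) := rfl

theorem pimap_isHomogeneous {K L : Type*} [CommSemiring K] [CommSemiring L] [Module K L]
    {σ : Type*} (π : L →ₗ[K] K) {p : MvPolynomial σ L} {d : ℕ} (hp : p.IsHomogeneous d) :
    (pimap π p).IsHomogeneous d := by
  intro α hα
  rw [coeff_pimap] at hα
  exact hp (fun h => hα (by rw [h, map_zero]))

theorem pimap_map_mul {K L : Type*} [CommSemiring K] [CommSemiring L] [Algebra K L]
    {σ : Type*} (π : L →ₗ[K] K) (g : MvPolynomial σ K) (h : MvPolynomial σ L) :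
    pimap π (MvPolynomial.map (algebraMap K L) g * h) = g * pimap π h := by
  classical
  apply MvPolynomial.ext; intro α
  rw [coeff_pimap, coeff_mul, coeff_mul, map_sum]
  apply Finset.sum_congr rfl
  intro x _
  rw [coeff_map, coeff_pimap, ← Algebra.smul_def, map_smul, smul_eq_mul]

theorem pimap_map {K L : Type*} [CommSemiring K] [CommSemiring L] [Algebra K L] {σ : Type*}
    (π : L →ₗ[K] K) (hπ : ∀ c : K, π (algebraMap K L c) = c) (f : MvPolynomial σ K) :
    pimap π (MvPolynomial.map (algebraMap K L) f) = f := by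
  apply MvPolynomial.ext; intro α
  rw [coeff_pimap, coeff_map, hπ]

theorem pimap_sum {K L : Type*} [CommSemiring K] [CommSemiring L] [Module K L] {σ : Type*}
    (π : L →ₗ[K] K) {ι : Type*} (s : Finset ι) (g : ι → MvPolynomial σ L) :
    pimap π (∑ i ∈ s, g i) = ∑ i ∈ s, pimap π (g i) := by
  apply MvPolynomial.ext; intro α
  rw [coeff_pimap, coeff_sum, map_sum, coeff_sum]
  exact Finset.sum_congr rfl fun i _ => rfl

theorem strengthDecomp_of_fintype {K : Type*} [CommSemiring K] {σ : Type*}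
    {f : MvPolynomial σ K} {ι : Type*} [Fintype ι]
    (a b : ι → MvPolynomial σ K) (da db : ι → ℕ)
    (h : ∀ i, 0 < da i ∧ 0 < db i ∧ (a i).IsHomogeneous (da i) ∧ (b i).IsHomogeneous (db i))
    (hsum : f = ∑ i, a i * b i) : StrengthDecomp f (Fintype.card ι) := by
  classical
  obtain ⟨e⟩ := Fintype.truncEquivFin ι
  refine ⟨a ∘ e.symm, b ∘ e.symm, da ∘ e.symm, db ∘ e.symm, fun i => h _, ?_⟩
  rw [hsum]
  exact (Equiv.sum_comp e.symm (fun i => a i * b i)).symm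

theorem exists_strengthDecomp {K : Type*} [CommSemiring K] {σ : Type*}
    {f : MvPolynomial σ K} {d : ℕ} (hd : 2 ≤ d) (hf : f.IsHomogeneous d) :
    ∃ r, StrengthDecomp f r := by
  classical
  refine ⟨Fintype.card f.support, ?_⟩
  have key : ∀ α : f.support, ∃ i, 0 < (α : σ →₀ ℕ) i := by
    rintro ⟨α, hα⟩
    by_contra hcon
    push_neg at hcon
    have hz : α = 0 := by ext i; exact Nat.le_zero.mp (hcon i)
    have hdeg := hf (mem_support_iff.mp hα)
    rw [hz] at hdeg
    simp at hdeg
    omega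
  choose idx hidx using key
  refine strengthDecomp_of_fintype
    (fun α => monomial (Finsupp.single (idx α) 1) (coeff (α : σ →₀ ℕ) f))
    (fun α => monomial ((α : σ →₀ ℕ) - Finsupp.single (idx α) 1) 1)
    (fun _ => 1) (fun _ => d - 1) ?_ ?_
  · intro α
    have hle : Finsupp.single (idx α) 1 ≤ (α : σ →₀ ℕ) := by
      rw [Finsupp.single_le_iff]; exact hidx α
    have hdeg := hf (mem_support_iff.mp α.2)
    have hdeg' : ((α : σ →₀ ℕ)).degree = d := by
      rw [Finsupp.degree_eq_weight_one]; exact hdeg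
    clear hdeg
    have hdeg := hdeg'
    have hds : (Finsupp.single (idx α) 1).degree = 1 := by
      exact Finsupp.degree_single _ _
    have hsplit : Finsupp.single (idx α) 1 + ((α : σ →₀ ℕ) - Finsupp.single (idx α) 1)
        = (α : σ →₀ ℕ) := add_tsub_cancel_of_le hle
    have hdadd : ((α : σ →₀ ℕ) - Finsupp.single (idx α) 1).degree = d - 1 := by
      have hadd : ∀ s t : σ →₀ ℕ, (s + t).degree = s.degree + t.degree := fun s t => by
        simp [Finsupp.degree_eq_weight_one]
      have h2 : (Finsupp.single (idx α) 1).degree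
          + ((α : σ →₀ ℕ) - Finsupp.single (idx α) 1).degree = ((α : σ →₀ ℕ)).degree := by
        rw [← hadd, hsplit]
      omega
    refine ⟨one_pos, ?_, isHomogeneous_monomial _ hds, isHomogeneous_monomial _ hdadd⟩
    show 0 < d - 1
    omega
  · rw [Finset.sum_coe_sort_eq_attach]
    have heq : ∀ α ∈ f.support.attach,
        monomial (Finsupp.single (idx α) 1) (coeff (α : σ →₀ ℕ) f)
          * monomial ((α : σ →₀ ℕ) - Finsupp.single (idx α) 1) 1
        = monomial (α : σ →₀ ℕ) (coeff (α : σ →₀ ℕ) f) := by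
      intro α _
      have hle : Finsupp.single (idx α) 1 ≤ (α : σ →₀ ℕ) := by
        rw [Finsupp.single_le_iff]; exact hidx α
      rw [monomial_mul, mul_one, add_tsub_cancel_of_le hle]
    rw [Finset.sum_congr rfl heq, Finset.sum_attach f.support
      (fun α => monomial α (coeff α f)), support_sum_monomial_coeff]

/-- Let `K` be a field and `f ∈ K[x₁,…,xₙ]` a form of degree `d ≥ 2`.
Let `L` be a field extension of `K` with `e := [L:K] < ∞`. Then `s_K(f) ≤ e · s_L(f)`. -/
theorem strength_le_finrank_mul_strength_extension
    (K L : Type*) [Field K] [Field L] [Algebra K L] [FiniteDimensional K L]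
    (n d : ℕ) (hd : 2 ≤ d) (f : MvPolynomial (Fin n) K) (hf : f.IsHomogeneous d) :
    strength f ≤ Module.finrank K L * strength (MvPolynomial.map (algebraMap K L) f) := by
  classical
  set fL := MvPolynomial.map (algebraMap K L) f with hfL
  have hfLhom : fL.IsHomogeneous d := hf.map _
  have hne : {r | StrengthDecomp fL r}.Nonempty := exists_strengthDecomp hd hfLhom
  set r := strength fL with hr
  set e := Module.finrank K L with he
  have hmem : StrengthDecomp fL r := Nat.sInf_mem hne
  obtain ⟨a, b, da, db, hhom, hsum⟩ := hmem
  obtain ⟨π, hπ⟩ := LinearMap.exists_leftInverse_of_injective (Algebra.linearMap K L)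
    (LinearMap.ker_eq_bot.mpr (by
      intro x y hxy
      exact (algebraMap K L).injective hxy))
  have hπ1 : ∀ c : K, π (algebraMap K L c) = c := fun c => LinearMap.congr_fun hπ c
  set B := Module.finBasis K L with hB
  set A : Fin e × Fin r → MvPolynomial (Fin n) K :=
    fun p => pimap (B.coord p.1) (a p.2) with hA
  set Bp : Fin e × Fin r → MvPolynomial (Fin n) K :=
    fun p => pimap π (C (B p.1) * b p.2) with hBp
  have hai : ∀ i : Fin r, a i = ∑ j : Fin e,
      C (B j) * MvPolynomial.map (algebraMap K L) (A (j, i)) := by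
    intro i
    apply MvPolynomial.ext; intro α
    rw [coeff_sum]
    have : ∀ j : Fin e, coeff α (C (B j) * MvPolynomial.map (algebraMap K L) (A (j, i)))
        = B.repr (coeff α (a i)) j • B j := by
      intro j
      rw [coeff_C_mul, coeff_map, hA]
      simp only
      rw [coeff_pimap, Module.Basis.coord_apply, mul_comm, ← Algebra.smul_def]
    rw [Finset.sum_congr rfl fun j _ => this j, B.sum_repr (coeff α (a i))]
  have hkey : ∀ i : Fin r, pimap π (a i * b i) = ∑ j : Fin e, A (j, i) * Bp (j, i) := by
    intro i
    have h1 : a i * b i = ∑ j : Fin e,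
        MvPolynomial.map (algebraMap K L) (A (j, i)) * (C (B j) * b i) := by
      rw [hai i, Finset.sum_mul]
      exact Finset.sum_congr rfl fun j _ => by ring
    rw [h1, pimap_sum]
    exact Finset.sum_congr rfl fun j _ => pimap_map_mul π _ _
  have hfeq : f = ∑ p : Fin e × Fin r, A p * Bp p := by
    have h0 : f = pimap π fL := (pimap_map π hπ1 f).symm
    rw [h0, hsum, pimap_sum, Fintype.sum_prod_type]
    rw [Finset.sum_comm]
    exact Finset.sum_congr rfl fun i _ => hkey i
  have hdecomp : StrengthDecomp f (Fintype.card (Fin e × Fin r)) :=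
    strengthDecomp_of_fintype A Bp (fun p => da p.2) (fun p => db p.2)
      (fun p => by
        obtain ⟨h1, h2, h3, h4⟩ := hhom p.2
        exact ⟨h1, h2, pimap_isHomogeneous _ h3,
          pimap_isHomogeneous _ (by simpa using (isHomogeneous_C _ (B p.1)).mul h4)⟩)
      hfeq
  have hcard : Fintype.card (Fin e × Fin r) = e * r := by simp
  rw [hcard] at hdecomp
  exact Nat.sInf_le hdecomp
end

section
/- For every n ≥ 1, the strength of the quadratic form f = x₁² + ⋯ + xₙ² over the real numbers equals n, i.e. s_ℝ(x₁² + ⋯ + xₙ²) = n. -/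
open MvPolynomial

/-- A monomial of degree 1 is `single j 1` for some `j`. -/
lemma degree_one_eq_single {n : ℕ} (m : Fin n →₀ ℕ) (h : Finsupp.degree m = 1) :
    ∃ j, m = Finsupp.single j 1 := by
  classical
  have hne : m ≠ 0 := by
    rintro rfl; simp [Finsupp.degree] at h
  obtain ⟨j, hj⟩ := Finsupp.ne_iff.mp hne
  simp only [Finsupp.coe_zero, Pi.zero_apply] at hj
  refine ⟨j, ?_⟩
  have hjs : j ∈ m.support := Finsupp.mem_support_iff.mpr hj
  have h1 : m j ≤ 1 := by
    rw [Finsupp.degree] at h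
    calc m j ≤ ∑ i ∈ m.support, m i := Finset.single_le_sum (fun i _ => Nat.zero_le _) hjs
    _ = 1 := h
  have hmj : m j = 1 := le_antisymm h1 (Nat.one_le_iff_ne_zero.mpr hj)
  ext i
  rcases eq_or_ne i j with rfl | hij
  · simp [hmj]
  · rw [Finsupp.single_eq_of_ne' (Ne.symm hij)]
    by_contra hi
    have his : i ∈ m.support := Finsupp.mem_support_iff.mpr hi
    have herase := Finset.add_sum_erase _ m hjs
    have h2 : i ∈ m.support.erase j := Finset.mem_erase.mpr ⟨hij, his⟩
    have hle : m i ≤ ∑ k ∈ m.support.erase j, m k :=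
      Finset.single_le_sum (fun k _ => Nat.zero_le _) h2
    rw [Finsupp.degree] at h
    replace h : ∑ k ∈ m.support, m k = 1 := h
    omega

/-- A homogeneous polynomial of degree 1 is a linear combination of the variables. -/
lemma eq_sum_C_mul_X {n : ℕ} {p : MvPolynomial (Fin n) ℝ} (hp : p.IsHomogeneous 1) :
    p = ∑ j : Fin n, C (coeff (Finsupp.single j 1) p) * X j := by
  classical
  apply MvPolynomial.ext
  intro m
  rw [coeff_sum]
  simp only [coeff_C_mul, coeff_X']
  by_cases hm : ∃ j, m = Finsupp.single j 1
  · obtain ⟨j, rfl⟩ := hm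
    rw [Finset.sum_eq_single j]
    · simp
    · intro k _ hk
      rw [if_neg, mul_zero]
      intro hsk
      exact hk (Finsupp.single_left_injective one_ne_zero hsk)
    · simp
  · have h1 : coeff m p = 0 := by
      by_contra hc
      have := hp hc
      rw [show (Finsupp.weight 1 : (Fin n →₀ ℕ) →+ ℕ) = Finsupp.weight (fun _ => 1) from rfl,
        ← Finsupp.degree_eq_weight_one] at this
      exact hm (degree_one_eq_single m this)
    rw [h1]
    symm
    apply Finset.sum_eq_zero
    intro j _
    rw [if_neg, mul_zero]
    intro hsk
    exact hm ⟨j, hsk.symm⟩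

lemma eval_linear {n : ℕ} {p : MvPolynomial (Fin n) ℝ} (hp : p.IsHomogeneous 1)
    (v : Fin n → ℝ) :
    eval v p = ∑ j : Fin n, coeff (Finsupp.single j 1) p * v j := by
  conv_lhs => rw [eq_sum_C_mul_X hp]
  simp

/-- Sum of squares is homogeneous of degree 2. -/
lemma sum_sq_isHomogeneous (n : ℕ) :
    (∑ i : Fin n, (X i : MvPolynomial (Fin n) ℝ) ^ 2).IsHomogeneous 2 :=
  IsHomogeneous.sum _ _ _ fun i _ => by
    simpa using (isHomogeneous_X ℝ i).pow 2

lemma no_small_decomp {n r : ℕ} (hr : r < n) :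
    ¬ StrengthDecomp (∑ i : Fin n, (X i : MvPolynomial (Fin n) ℝ) ^ 2) r := by
  classical
  rintro ⟨a, b, da, db, hab, heq⟩
  set f : MvPolynomial (Fin n) ℝ := ∑ i : Fin n, (X i) ^ 2 with hf
  -- extract degree-2 part
  set S : Finset (Fin r) := Finset.univ.filter (fun i => da i + db i = 2) with hS
  have hfS : f = ∑ i ∈ S, a i * b i := by
    have h2 : homogeneousComponent 2 f = f :=
      by
        rw [homogeneousComponent_of_mem ((mem_homogeneousSubmodule _ _).mpr
          (sum_sq_isHomogeneous n))]
        simp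
        rfl
    calc f = homogeneousComponent 2 f := h2.symm
    _ = ∑ i : Fin r, homogeneousComponent 2 (a i * b i) := by
        rw [heq]; exact map_sum _ _ _
    _ = ∑ i ∈ S, a i * b i := by
        rw [Finset.sum_filter]
        apply Finset.sum_congr rfl
        intro i _
        have hh : (a i * b i) ∈ homogeneousSubmodule (Fin n) ℝ (da i + db i) :=
          (mem_homogeneousSubmodule _ _).mpr ((hab i).2.2.1.mul (hab i).2.2.2)
        rw [homogeneousComponent_of_mem hh]
        by_cases h : da i + db i = 2
        · rw [if_pos h.symm, if_pos h]
        · rw [if_neg (fun hx => h hx.symm), if_neg h]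
  -- the linear map given by linear parts of the a i
  let L : (Fin n → ℝ) →ₗ[ℝ] (Fin r → ℝ) :=
    LinearMap.pi fun i => ∑ j : Fin n,
      coeff (Finsupp.single j 1) (a i) • (LinearMap.proj j : (Fin n → ℝ) →ₗ[ℝ] ℝ)
  have hker : LinearMap.ker L ≠ ⊥ := by
    apply LinearMap.ker_ne_bot_of_finrank_lt
    simpa using hr
  obtain ⟨v, hvL, hv0⟩ := (Submodule.ne_bot_iff _).mp hker
  have hLv : ∀ i, L v i = 0 := fun i => congrFun hvL i
  -- a i vanishes at v for i ∈ S
  have hav : ∀ i ∈ S, eval v (a i) = 0 := by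
    intro i hi
    have hda : da i = 1 := by
      have := (hab i).1
      have := (hab i).2.1
      have h2 : da i + db i = 2 := (Finset.mem_filter.mp hi).2
      omega
    have hhom : (a i).IsHomogeneous 1 := hda ▸ (hab i).2.2.1
    rw [eval_linear hhom v]
    have := hLv i
    simpa [L, LinearMap.pi_apply, smul_eq_mul] using this
  -- f vanishes at v
  have hfv : eval v f = 0 := by
    rw [hfS, map_sum]
    apply Finset.sum_eq_zero
    intro i hi
    rw [map_mul, hav i hi, zero_mul]
  -- but f(v) = ∑ v i ^ 2 > 0
  have hfv' : eval v f = ∑ i : Fin n, v i ^ 2 := by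
    simp [hf]
  rw [hfv'] at hfv
  have : ∀ i ∈ Finset.univ, v i ^ 2 = 0 :=
    (Finset.sum_eq_zero_iff_of_nonneg (fun i _ => sq_nonneg (v i))).mp hfv
  apply hv0
  funext i
  exact pow_eq_zero_iff (n := 2) (by norm_num) |>.mp (this i (Finset.mem_univ i))

/-- For every `n ≥ 1`, the strength of `x₁² + ⋯ + xₙ²` over `ℝ`
equals `n`. -/
theorem strength_sum_sq_real (n : ℕ) (hn : 1 ≤ n) :
    strength (∑ i : Fin n, (MvPolynomial.X i : MvPolynomial (Fin n) ℝ) ^ 2) = n := by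
  have hmem : StrengthDecomp (∑ i : Fin n, (X i : MvPolynomial (Fin n) ℝ) ^ 2) n := by
    refine ⟨X, X, fun _ => 1, fun _ => 1, fun i =>
      ⟨one_pos, one_pos, isHomogeneous_X ℝ i, isHomogeneous_X ℝ i⟩, ?_⟩
    apply Finset.sum_congr rfl
    intro i _
    ring
  unfold strength
  apply le_antisymm
  · exact Nat.sInf_le hmem
  · exact le_csInf ⟨n, hmem⟩ fun r hrmem =>
      le_of_not_gt fun h => no_small_decomp h hrmem
end

section
/- Let K be an infinite field and f ∈ K[x₁,…,xₙ] a nonzero quadratic form (homogeneous of degree 2). Then s_K(f) equals the minimal codimension of a K-linear subspace W of Kⁿ such that f(w) = 0 for all w ∈ W. -/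
open MvPolynomial

section AuxLemmas

open Finsupp

lemma StrengthAux.degree_add {σ : Type*} (a b : σ →₀ ℕ) :
    (a + b).degree = a.degree + b.degree := by
  have h := Finsupp.degree_eq_weight_one (R := ℕ) (σ := σ)
  rw [h]
  exact map_add _ a b

lemma StrengthAux.degree_single_one {σ : Type*} (s : σ) :
    (Finsupp.single s 1 : σ →₀ ℕ).degree = 1 := by
  classical
  simp [Finsupp.degree_single]

lemma StrengthAux.exists_split {σ : Type*} (m : σ →₀ ℕ) (k : ℕ) (h : m.degree = k + 1) :
    ∃ (s : σ) (m' : σ →₀ ℕ), m = Finsupp.single s 1 + m' ∧ m'.degree = k := by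
  classical
  have hm : m ≠ 0 := by
    rintro rfl
    simp [map_zero] at h
  obtain ⟨s, hs⟩ : ∃ s, m s ≠ 0 := by
    by_contra hc
    push_neg at hc
    exact hm (Finsupp.ext fun a => hc a)
  refine ⟨s, m - Finsupp.single s 1, ?_, ?_⟩
  · ext j
    by_cases hj : j = s
    · subst hj
      simp only [Finsupp.add_apply, Finsupp.tsub_apply, Finsupp.single_eq_same]
      omega
    · simp [Finsupp.add_apply, Finsupp.tsub_apply, Finsupp.single_apply, Ne.symm hj]
  · have heq : m = Finsupp.single s 1 + (m - Finsupp.single s 1) := by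
      ext j
      by_cases hj : j = s
      · subst hj
        simp only [Finsupp.add_apply, Finsupp.tsub_apply, Finsupp.single_eq_same]
        omega
      · simp [Finsupp.add_apply, Finsupp.tsub_apply, Finsupp.single_apply, Ne.symm hj]
    rw [heq, StrengthAux.degree_add, StrengthAux.degree_single_one] at h
    omega

lemma StrengthAux.eq_single_of_degree_one {σ : Type*} (m : σ →₀ ℕ) (h : m.degree = 1) :
    ∃ t, m = Finsupp.single t 1 := by
  obtain ⟨s, m', hm, h0⟩ := StrengthAux.exists_split m 0 h
  rw [Finsupp.degree_eq_zero_iff] at h0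
  exact ⟨s, by rw [hm, h0, add_zero]⟩

lemma StrengthAux.eq_two {σ : Type*} (m : σ →₀ ℕ) (h : m.degree = 2) :
    ∃ s t, m = Finsupp.single s 1 + Finsupp.single t 1 := by
  obtain ⟨s, m', hm, h1⟩ := StrengthAux.exists_split m 1 h
  obtain ⟨t, ht⟩ := StrengthAux.eq_single_of_degree_one m' h1
  exact ⟨s, t, by rw [hm, ht]⟩

end AuxLemmas

section LinPol

variable {K : Type*} [Field K] {n : ℕ}

/-- The degree-1 polynomial associated to a linear functional on `Kⁿ`. -/
noncomputable def StrengthAux.polOf (L : (Fin n → K) →ₗ[K] K) : MvPolynomial (Fin n) K :=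
  ∑ t, C (L fun j => if t = j then 1 else 0) * X t

lemma StrengthAux.polOf_isHomogeneous (L : (Fin n → K) →ₗ[K] K) :
    (StrengthAux.polOf L).IsHomogeneous 1 :=
  IsHomogeneous.sum _ _ _ fun i _ => isHomogeneous_C_mul_X _ i

lemma StrengthAux.eval_polOf (L : (Fin n → K) →ₗ[K] K) (x : Fin n → K) :
    eval x (StrengthAux.polOf L) = L x := by
  rw [LinearMap.pi_apply_eq_sum_univ L x]
  simp [StrengthAux.polOf, smul_eq_mul, mul_comm]

/-- The linear functional associated to a degree-1 polynomial. -/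
noncomputable def StrengthAux.linOf (p : MvPolynomial (Fin n) K) : (Fin n → K) →ₗ[K] K :=
  ∑ t, coeff (Finsupp.single t 1) p • LinearMap.proj t

lemma StrengthAux.eval_eq_linOf {p : MvPolynomial (Fin n) K} (hp : p.IsHomogeneous 1)
    (x : Fin n → K) : eval x p = StrengthAux.linOf p x := by
  classical
  have hlin : StrengthAux.linOf p x = ∑ t, coeff (Finsupp.single t 1) p * x t := by
    simp [StrengthAux.linOf, LinearMap.sum_apply, smul_eq_mul]
  conv_lhs => rw [p.as_sum]
  rw [map_sum, hlin]
  have hsub : p.support ⊆ Finset.univ.image (fun t : Fin n => Finsupp.single t 1) := by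
    intro m hm
    have hd : m.degree = 1 := by
      by_contra hne
      exact (mem_support_iff.mp hm) (hp.coeff_eq_zero hne)
    obtain ⟨t, rfl⟩ := StrengthAux.eq_single_of_degree_one m hd
    exact Finset.mem_image.2 ⟨t, Finset.mem_univ t, rfl⟩
  rw [Finset.sum_subset hsub ?_]
  · rw [Finset.sum_image ?_]
    · refine Finset.sum_congr rfl fun t _ => ?_
      rw [eval_monomial]
      simp [Finsupp.prod_single_index]
    · intro a _ b _ hab
      exact Finsupp.single_left_injective one_ne_zero hab
  · intro m _ hm
    rw [mem_support_iff, not_not] at hm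
    simp [hm]

end LinPol


section Main

variable {K : Type*} [Field K] {n : ℕ}

open StrengthAux

lemma StrengthAux.exists_subspace {r : ℕ} {f : MvPolynomial (Fin n) K}
    (hf : f.IsHomogeneous 2) (hd : StrengthDecomp f r) :
    ∃ W : Submodule K (Fin n → K),
      (∀ w ∈ W, MvPolynomial.eval w f = 0) ∧ n - Module.finrank K W ≤ r := by
  classical
  obtain ⟨a, b, da, db, hab, hsum⟩ := hd
  set Λ : Fin r → ((Fin n → K) →ₗ[K] K) :=
    fun i => if da i = 1 then linOf (a i) else 0 with hΛ
  set Φ : (Fin n → K) →ₗ[K] (Fin r → K) := LinearMap.pi Λ with hΦ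
  refine ⟨LinearMap.ker Φ, ?_, ?_⟩
  · intro x hx
    have hx1 : ∀ i, da i = 1 → MvPolynomial.eval x (a i) = 0 := by
      intro i hi
      have h0 := congrFun (LinearMap.mem_ker.mp hx) i
      rw [hΦ] at h0
      simp only [LinearMap.pi_apply, Pi.zero_apply, hΛ, if_pos hi] at h0
      have hhom : (a i).IsHomogeneous 1 := hi ▸ (hab i).2.2.1
      rw [eval_eq_linOf hhom x, h0]
    have hf2 : f = ∑ i, homogeneousComponent 2 (a i * b i) := by
      have h1 : homogeneousComponent 2 f = f := by
        rw [homogeneousComponent_of_mem ((mem_homogeneousSubmodule _ _).mpr hf), if_pos rfl]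
      conv_lhs => rw [← h1, hsum, map_sum]
    rw [hf2, map_sum]
    refine Finset.sum_eq_zero fun i _ => ?_
    have hprod : (a i * b i).IsHomogeneous (da i + db i) := (hab i).2.2.1.mul (hab i).2.2.2
    rw [homogeneousComponent_of_mem ((mem_homogeneousSubmodule _ _).mpr hprod)]
    by_cases h2 : 2 = da i + db i
    · rw [if_pos h2, map_mul, hx1 i (by have := (hab i).1; have := (hab i).2.1; omega), zero_mul]
    · rw [if_neg h2, map_zero]
  · have h1 : Module.finrank K (Fin n → K) = n := Module.finrank_fin_fun K
    have h2 := LinearMap.finrank_range_add_finrank_ker Φ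
    have h3 : Module.finrank K (LinearMap.range Φ) ≤ r := by
      have := Submodule.finrank_le (LinearMap.range Φ)
      rwa [Module.finrank_fin_fun] at this
    omega

lemma StrengthAux.decomp_of_subspace [Infinite K] {f : MvPolynomial (Fin n) K}
    (hf : f.IsHomogeneous 2) (hf0 : f ≠ 0) (W : Submodule K (Fin n → K))
    (hW : ∀ w ∈ W, MvPolynomial.eval w f = 0) :
    StrengthDecomp f (n - Module.finrank K W) := by
  classical
  have hdeg : ∀ m ∈ f.support, (m : Fin n →₀ ℕ).degree = 2 := fun m hm => by
    by_contra hne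
    exact (mem_support_iff.mp hm) (hf.coeff_eq_zero hne)
  obtain ⟨m0, hm0⟩ := MvPolynomial.support_nonempty.mpr hf0
  obtain ⟨s0, t0, -⟩ := StrengthAux.eq_two m0 (hdeg m0 hm0)
  haveI : Inhabited (Fin n) := ⟨s0⟩
  set k := Module.finrank K W with hk
  set c := n - k with hc
  have hkn : k ≤ n := by
    have := Submodule.finrank_le W
    rwa [Module.finrank_fin_fun] at this
  have hQfin : Module.finrank K ((Fin n → K) ⧸ W) = c := by
    have := Submodule.finrank_quotient_add_finrank W
    rw [Module.finrank_fin_fun] at this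
    omega
  set B := Module.finBasisOfFinrankEq K ((Fin n → K) ⧸ W) hQfin with hB
  set e : ((Fin n → K) ⧸ W) ≃ₗ[K] (Fin c → K) := B.equivFun with he
  set φ : (Fin n → K) →ₗ[K] (Fin c → K) := e.toLinearMap ∘ₗ W.mkQ with hφ
  have hker : LinearMap.ker φ = W := by
    rw [hφ, LinearMap.ker_comp, LinearMap.ker_eq_bot.mpr e.injective,
      Submodule.comap_bot, Submodule.ker_mkQ]
  have hsurj : LinearMap.range φ = ⊤ := by
    rw [hφ, LinearMap.range_comp, Submodule.range_mkQ, Submodule.map_top]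
    exact LinearMap.range_eq_top.mpr e.surjective
  obtain ⟨ψ, hψ⟩ := φ.exists_rightInverse_of_surjective hsurj
  set v : Fin c → (Fin n → K) := fun i => ψ fun j => if i = j then 1 else 0 with hv
  set p : (Fin n → K) →ₗ[K] (Fin n → K) := ψ ∘ₗ φ with hp
  set wm : (Fin n → K) →ₗ[K] (Fin n → K) := LinearMap.id - p with hwm
  have hwW : ∀ x, wm x ∈ W := by
    intro x
    rw [← hker, LinearMap.mem_ker]
    have h1 : φ (ψ (φ x)) = φ x := by
      have := LinearMap.congr_fun hψ (φ x)
      simpa using this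
    rw [hwm]
    simp [LinearMap.sub_apply, hp, h1]
  have hvsum : ∀ x, p x = ∑ i, φ x i • v i := by
    intro x
    rw [hp, LinearMap.comp_apply]
    exact LinearMap.pi_apply_eq_sum_univ ψ (φ x)
  set sel : (Fin n →₀ ℕ) → Fin n × Fin n := fun m =>
    if h : ∃ s t, m = Finsupp.single s 1 + Finsupp.single t 1
    then (h.choose, h.choose_spec.choose) else (default, default) with hsel
  have hst : ∀ m ∈ f.support,
      m = Finsupp.single (sel m).1 1 + Finsupp.single (sel m).2 1 := by
    intro m hm
    have hex : ∃ s t, (m : Fin n →₀ ℕ) = Finsupp.single s 1 + Finsupp.single t 1 :=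
      StrengthAux.eq_two m (hdeg m hm)
    rw [hsel]
    simp only [dif_pos hex]
    exact hex.choose_spec.choose_spec
  have heval : ∀ x : Fin n → K,
      MvPolynomial.eval x f = ∑ m ∈ f.support, coeff m f * (x (sel m).1 * x (sel m).2) := by
    intro x
    conv_lhs => rw [f.as_sum]
    rw [map_sum]
    refine Finset.sum_congr rfl fun m hm => ?_
    have hmon2 : ∀ (s t : Fin n) (r : K),
        monomial (Finsupp.single s 1 + Finsupp.single t 1) r = C r * X s * X t := by
      intro s t r
      rw [C_mul_X_eq_monomial,
        show (X t : MvPolynomial (Fin n) K) = monomial (Finsupp.single t 1) 1 from rfl,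
        monomial_mul, mul_one]
    have hmon : monomial m (coeff m f) = C (coeff m f) * X (sel m).1 * X (sel m).2 := by
      conv_lhs => rw [hst m hm]
      rw [hmon2, ← hst m hm]
    rw [hmon, map_mul, map_mul, eval_C, eval_X, eval_X, mul_assoc]
  set L : Fin c → ((Fin n → K) →ₗ[K] K) := fun i => (LinearMap.proj i).comp φ with hL
  set G : Fin c → ((Fin n → K) →ₗ[K] K) := fun i =>
    ∑ m ∈ f.support, coeff m f •
      (v i (sel m).1 • LinearMap.proj (sel m).2 +
       v i (sel m).2 • ((LinearMap.proj (sel m).1).comp wm)) with hG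
  have key : ∀ x, MvPolynomial.eval x f = ∑ i, L i x * G i x := by
    intro x
    have hGx : ∀ i, G i x = ∑ m ∈ f.support,
        coeff m f * (v i (sel m).1 * x (sel m).2 + v i (sel m).2 * wm x (sel m).1) := by
      intro i
      rw [hG]
      simp only [LinearMap.sum_apply, LinearMap.smul_apply, LinearMap.add_apply,
        LinearMap.coe_comp, Function.comp_apply, LinearMap.proj_apply, smul_eq_mul]
    have hLx : ∀ i, L i x = φ x i := fun i => rfl
    have hsplit : ∀ j, x j = p x j + wm x j := by
      intro j
      rw [hwm]
      simp
    have hPj : ∀ j, p x j = ∑ i, φ x i * v i j := by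
      intro j
      rw [hvsum x]
      simp [Finset.sum_apply]
    calc MvPolynomial.eval x f
        = ∑ m ∈ f.support, coeff m f * (x (sel m).1 * x (sel m).2) := heval x
      _ = ∑ m ∈ f.support, (coeff m f * (p x (sel m).1 * x (sel m).2
            + wm x (sel m).1 * p x (sel m).2)
            + coeff m f * (wm x (sel m).1 * wm x (sel m).2)) := by
          refine Finset.sum_congr rfl fun m hm => ?_
          rw [hsplit (sel m).1, hsplit (sel m).2]
          ring
      _ = ∑ m ∈ f.support, coeff m f * (p x (sel m).1 * x (sel m).2
            + wm x (sel m).1 * p x (sel m).2)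
          + MvPolynomial.eval (wm x) f := by
          rw [Finset.sum_add_distrib, heval (wm x)]
      _ = ∑ m ∈ f.support, coeff m f * (p x (sel m).1 * x (sel m).2
            + wm x (sel m).1 * p x (sel m).2) := by
          rw [hW _ (hwW x), add_zero]
      _ = ∑ m ∈ f.support, ∑ i, φ x i *
            (coeff m f * (v i (sel m).1 * x (sel m).2 + v i (sel m).2 * wm x (sel m).1)) := by
          refine Finset.sum_congr rfl fun m hm => ?_
          rw [hPj (sel m).1, hPj (sel m).2, Finset.sum_mul, Finset.mul_sum,
            ← Finset.sum_add_distrib, Finset.mul_sum]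
          refine Finset.sum_congr rfl fun i _ => ?_
          ring
      _ = ∑ i, ∑ m ∈ f.support, φ x i *
            (coeff m f * (v i (sel m).1 * x (sel m).2 + v i (sel m).2 * wm x (sel m).1)) :=
          Finset.sum_comm
      _ = ∑ i, L i x * G i x := by
          refine Finset.sum_congr rfl fun i _ => ?_
          rw [hLx, hGx, Finset.mul_sum]
  refine ⟨fun i => polOf (L i), fun i => polOf (G i), fun _ => 1, fun _ => 1,
    fun i => ⟨one_pos, one_pos, polOf_isHomogeneous _, polOf_isHomogeneous _⟩, ?_⟩
  apply MvPolynomial.funext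
  intro x
  rw [key x, map_sum]
  refine Finset.sum_congr rfl fun i _ => ?_
  rw [map_mul, eval_polOf, eval_polOf]

end Main

/-- Let `K` be an infinite field and `f` a nonzero quadratic form in
`K[x₁,…,xₙ]`. Then `s_K(f)` equals the minimal codimension of a `K`-linear subspace
`W ⊆ Kⁿ` on which `f` vanishes identically. -/
theorem strength_quadratic_eq_min_codim (K : Type*) [Field K] [Infinite K]
    (n : ℕ) (f : MvPolynomial (Fin n) K) (hf : f.IsHomogeneous 2) (hf0 : f ≠ 0) :
    strength f =
      sInf {c : ℕ | ∃ W : Submodule K (Fin n → K),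
        (∀ w ∈ W, MvPolynomial.eval w f = 0) ∧ c = n - Module.finrank K W} := by
  classical
  have hbotvan : ∀ w ∈ (⊥ : Submodule K (Fin n → K)), MvPolynomial.eval w f = 0 := by
    intro w hw
    rw [Submodule.mem_bot] at hw
    subst hw
    rw [eval_zero]
    have h0 : coeff 0 f = 0 := hf.coeff_eq_zero (by simp [map_zero])
    simpa [constantCoeff_eq] using h0
  have hbot : n ∈ {c : ℕ | ∃ W : Submodule K (Fin n → K),
      (∀ w ∈ W, MvPolynomial.eval w f = 0) ∧ c = n - Module.finrank K W} :=
    ⟨⊥, hbotvan, by simp⟩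
  have hTne : {c : ℕ | ∃ W : Submodule K (Fin n → K),
      (∀ w ∈ W, MvPolynomial.eval w f = 0) ∧ c = n - Module.finrank K W}.Nonempty := ⟨n, hbot⟩
  have hSne : {r | StrengthDecomp f r}.Nonempty :=
    ⟨n - Module.finrank K (⊥ : Submodule K (Fin n → K)),
      StrengthAux.decomp_of_subspace hf hf0 ⊥ hbotvan⟩
  apply le_antisymm
  · obtain ⟨W, hW, hcW⟩ := Nat.sInf_mem hTne
    rw [hcW]
    exact Nat.sInf_le (StrengthAux.decomp_of_subspace hf hf0 W hW)
  · have hs : StrengthDecomp f (strength f) := Nat.sInf_mem hSne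
    obtain ⟨W, hW, hle⟩ := StrengthAux.exists_subspace hf hs
    exact le_trans (Nat.sInf_le ⟨W, hW, rfl⟩) hle
end

section
/- Let K̄ be an algebraically closed field, let d ≥ 2, m ≥ 1, r ≥ 0, and let n be a positive integer with n^d > m² + r·(n^{d−1} + n). Then there exists a nonzero polynomial, with coefficients in the prime field of K̄, in the m·n^d standard coordinates on ((K̄ⁿ)^{⊗d})^m, that vanishes at every m-tuple of tensors in ((K̄ⁿ)^{⊗d})^m of collective partition rank at most r. In particular, the set of m-tuples of collective partition rank at most r is not Zariski dense in ((K̄ⁿ)^{⊗d})^m. -/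
set_option linter.unusedSectionVars false

open PiTensorProduct
open scoped TensorProduct

open MvPolynomial in
theorem pf_exists_annihilator {k : Type*} [Field k] {σ τ : Type*} [Fintype σ] [Fintype τ]
    (h : Fintype.card τ < Fintype.card σ) (f : σ → MvPolynomial τ k) :
    ∃ P : MvPolynomial σ k, P ≠ 0 ∧ MvPolynomial.aeval f P = 0 := by
  classical
  set M := Fintype.card τ with hM
  set N := Fintype.card σ with hN
  set D : ℕ := (Finset.univ.sup fun i => (f i).totalDegree) + 1 with hD
  have hfD : ∀ i, (f i).totalDegree ≤ D := fun i =>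
    by rw [hD]; exact Nat.le_succ_of_le (Finset.le_sup (f := fun i => (f i).totalDegree) (Finset.mem_univ i))
  set s : ℕ := (N * D + 1) ^ M with hs
  set E : ℕ := N * (s * D) with hE
  set v : (σ → Fin (s + 1)) → MvPolynomial τ k := fun a => ∏ i, f i ^ (a i : ℕ) with hv
  have hvmem : ∀ a, v a ∈ restrictDegree τ k E := by
    intro a
    apply restrictTotalDegree_le_restrictDegree
    rw [mem_restrictTotalDegree]
    calc (∏ i, f i ^ (a i : ℕ)).totalDegree ≤ ∑ i, (f i ^ (a i : ℕ)).totalDegree :=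
          totalDegree_finset_prod _ _
      _ ≤ ∑ _i : σ, s * D := Finset.sum_le_sum fun i _ => le_trans (totalDegree_pow _ _)
          (Nat.mul_le_mul (Nat.lt_succ_iff.mp (a i).isLt) (hfD i))
      _ = N * (s * D) := by rw [Finset.sum_const, Finset.card_univ, smul_eq_mul]
  set vV : (σ → Fin (s + 1)) → restrictDegree τ k E := fun a => ⟨v a, hvmem a⟩ with hvV
  let e : {x : τ →₀ ℕ | ∀ i, x i ≤ E} ≃ (τ → Fin (E + 1)) :=
    { toFun := fun x i => ⟨x.1 i, Nat.lt_succ_of_le (x.2 i)⟩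
      invFun := fun g => ⟨Finsupp.equivFunOnFinite.symm fun i => (g i : ℕ),
        fun i => by simpa [Nat.lt_succ_iff] using Nat.lt_succ_iff.mp (g i).isLt⟩
      left_inv := fun x => by ext i; simp
      right_inv := fun g => by ext i; simp }
  haveI : Fintype {x : τ →₀ ℕ | ∀ i, x i ≤ E} := Fintype.ofEquiv _ e.symm
  have hrank : Module.finrank k (restrictDegree τ k E) = (E + 1) ^ M := by
    show Module.finrank k (restrictSupport k {n : τ →₀ ℕ | ∀ i, n i ≤ E}) = (E + 1) ^ M
    rw [Module.finrank_eq_card_basis (MvPolynomial.basisRestrictSupport k _)]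
    rw [Fintype.card_congr e, Fintype.card_fun, Fintype.card_fin]
  have hlt : Module.finrank k (restrictDegree τ k E) < Fintype.card (σ → Fin (s + 1)) := by
    rw [hrank, Fintype.card_fun, Fintype.card_fin]
    have h1 : E + 1 ≤ (N * D + 1) * (s + 1) := by
      have h2 : (N * D + 1) * (s + 1) = N * D * s + N * D + s + 1 := by ring
      have h3 : E = N * D * s := by rw [hE]; ring
      omega
    calc (E + 1) ^ M ≤ ((N * D + 1) * (s + 1)) ^ M := Nat.pow_le_pow_left h1 M
      _ = s * (s + 1) ^ M := by rw [mul_pow, hs]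
      _ < (s + 1) * (s + 1) ^ M :=
          Nat.mul_lt_mul_of_lt_of_le (Nat.lt_succ_self s) le_rfl (Nat.pow_pos (Nat.succ_pos s))
      _ = (s + 1) ^ (M + 1) := by ring
      _ ≤ (s + 1) ^ N := Nat.pow_le_pow_right (Nat.succ_pos s) h
  have hnl : ¬ LinearIndependent k vV := by
    intro hli
    exact absurd hli.fintype_card_le_finrank (not_le.mpr hlt)
  obtain ⟨g, hg, a₀, ha₀⟩ := Fintype.not_linearIndependent_iff.mp hnl
  set αm : (σ → Fin (s + 1)) → (σ →₀ ℕ) :=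
    fun a => Finsupp.equivFunOnFinite.symm fun i => (a i : ℕ) with hαm
  have hαinj : Function.Injective αm := by
    intro a b hab
    have := Finsupp.equivFunOnFinite.symm.injective hab
    funext i
    exact Fin.ext (congrFun this i)
  refine ⟨∑ a, monomial (αm a) (g a), ?_, ?_⟩
  · intro h0
    have hco : MvPolynomial.coeff (αm a₀) (∑ a, monomial (αm a) (g a)) = g a₀ := by
      rw [MvPolynomial.coeff_sum, Finset.sum_eq_single a₀]
      · simp [MvPolynomial.coeff_monomial]
      · intro b _ hb
        rw [MvPolynomial.coeff_monomial, if_neg (fun hh => hb (hαinj hh))]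
      · simp
    rw [h0] at hco
    simp only [MvPolynomial.coeff_zero] at hco
    exact ha₀ hco.symm
  · have hsum : ∑ a, g a • v a = 0 := by
      have hcoe := congrArg (Subtype.val) hg
      simpa using hcoe
    rw [map_sum]
    have heq : ∀ a, MvPolynomial.aeval f (monomial (αm a) (g a)) = g a • v a := by
      intro a
      rw [aeval_monomial, algebraMap_eq, ← MvPolynomial.smul_eq_C_mul]
      congr 1
      rw [Finsupp.prod_pow]
      refine Finset.prod_congr rfl fun i _ => ?_
      simp [hαm]
    rw [Finset.sum_congr rfl fun a _ => heq a, hsum]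
-- TENSOR AUX
theorem my_split {α : Type*} [Fintype α] {M : Type*} [CommMonoid M] (p : α → Prop)
    [DecidablePred p] [Fintype {x // p x}] [Fintype {x // ¬ p x}] (f : α → M) :
    (∏ i : {x // p x}, f i.1) * (∏ i : {x // ¬ p x}, f i.1) = ∏ i, f i := by
  convert Fintype.prod_subtype_mul_prod_subtype p f using 2 <;>
    · congr 1
      exact Finset.ext fun x => by simp

section AuxTensor

variable (F : Type*) [Field F]

/-- Generic coordinate functional on a tensor power of `Fin n → F`. -/
noncomputable def coordT {ι : Type*} [Fintype ι] (n : ℕ) (u : ι → Fin n) :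
    (⨂[F] _ : ι, (Fin n → F)) →ₗ[F] F :=
  PiTensorProduct.lift
    ((MultilinearMap.mkPiAlgebra F ι F).compLinearMap (fun i => LinearMap.proj (u i)))

theorem coordT_tprod {ι : Type*} [Fintype ι] (n : ℕ) (u : ι → Fin n)
    (v : ι → (Fin n → F)) :
    coordT F n u (tprod F v) = ∏ i, v i (u i) := by
  simp [coordT]

theorem stdCoord_eq_coordT (d n : ℕ) (w : Fin d → Fin n) :
    stdCoord F d n w = coordT F n w := rfl

theorem partMul_tprod_tprod {d : ℕ} (W : Fin d → Type*) [∀ i, AddCommGroup (W i)]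
    [∀ i, Module F (W i)] (I : Finset (Fin d)) (v : ∀ i : {x : Fin d // x ∈ I}, W i)
    (w : ∀ i : {x : Fin d // x ∉ I}, W i) :
    partMul F W I (tprod F v) (tprod F w) = tprod F (combineVec W I v w) := by
  simp [partMul, partMulOuter, partMulInner]

theorem coordT_partMul {d n : ℕ} (I : Finset (Fin d)) (w : Fin d → Fin n)
    (a : ⨂[F] _ : {x : Fin d // x ∈ I}, (Fin n → F))
    (b : ⨂[F] _ : {x : Fin d // x ∉ I}, (Fin n → F)) :
    coordT F n w (partMul F (fun _ => Fin n → F) I a b) =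
      coordT F n (fun i : {x : Fin d // x ∈ I} => w i) a *
        coordT F n (fun i : {x : Fin d // x ∉ I} => w i) b := by
  induction a using PiTensorProduct.induction_on with
  | smul_tprod r v =>
    induction b using PiTensorProduct.induction_on with
    | smul_tprod r' v' =>
      simp only [map_smul, LinearMap.smul_apply, smul_eq_mul, partMul_tprod_tprod, coordT_tprod]
      rw [← my_split (fun i : Fin d => i ∈ I)
        (fun i => combineVec (fun _ => Fin n → F) I v v' i (w i))]
      have h1 : ∀ i : {x : Fin d // x ∈ I},
          combineVec (fun _ => Fin n → F) I v v' i.1 (w i.1) = v i (w i.1) := fun i => by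
        simp [combineVec, i.2]
      have h2 : ∀ i : {x : Fin d // ¬ x ∈ I},
          combineVec (fun _ => Fin n → F) I v v' i.1 (w i.1) = v' i (w i.1) := fun i => by
        simp [combineVec, i.2]
      rw [Finset.prod_congr rfl fun i _ => h1 i, Finset.prod_congr rfl fun i _ => h2 i]
      ring
    | add x y hx hy =>
      rw [map_add, map_add, map_add, hx, hy]
      ring
  | add x y hx hy =>
    rw [map_add, LinearMap.add_apply, map_add, map_add, hx, hy]
    ring

theorem coordT_tprod_single {d n : ℕ} (w u : Fin d → Fin n) :
    coordT F n u (tprod F fun i => (Pi.single (w i) 1 : Fin n → F)) =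
      if w = u then 1 else 0 := by
  rw [coordT_tprod]
  rcases eq_or_ne w u with rfl | hne
  · simp
  · rw [if_neg hne]
    obtain ⟨i, hi⟩ := Function.ne_iff.mp hne
    refine Finset.prod_eq_zero (Finset.mem_univ i) ?_
    rw [Pi.single_apply, if_neg (fun h => hi h.symm)]

end AuxTensor
-- PARAMETRIZATION
section ParamSec

/-- Parameter space for tuples whose `ℓ₀`-normalised combination has a rank-`≤ r`
partition decomposition with subsets `I`. -/
def PParam (d m r n : ℕ) (ℓ₀ : Fin m) (I : Fin r → Finset (Fin d)) : Type :=
  {ℓ : Fin m // ℓ ≠ ℓ₀} ⊕ (({ℓ : Fin m // ℓ ≠ ℓ₀} × (Fin d → Fin n)) ⊕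
    ((Σ kk : Fin r, ({x : Fin d // x ∈ I kk} → Fin n)) ⊕
     (Σ kk : Fin r, ({x : Fin d // x ∉ I kk} → Fin n))))

instance PParam.fintype (d m r n : ℕ) (ℓ₀ : Fin m) (I : Fin r → Finset (Fin d)) :
    Fintype (PParam d m r n ℓ₀ I) := by
  unfold PParam; infer_instance

variable (k₀ : Type*) [Field k₀]

/-- The polynomial parametrisation of the coordinates. -/
noncomputable def gPoly (d m r n : ℕ) (ℓ₀ : Fin m) (I : Fin r → Finset (Fin d)) :
    (Fin d → Fin n) × Fin m → MvPolynomial (PParam d m r n ℓ₀ I) k₀ := fun p =>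
  if h : p.2 = ℓ₀ then
    (∑ kk : Fin r,
        MvPolynomial.X (Sum.inr (Sum.inr (Sum.inl ⟨kk, fun i => p.1 i⟩))) *
          MvPolynomial.X (Sum.inr (Sum.inr (Sum.inr ⟨kk, fun i => p.1 i⟩)))) -
      ∑ ℓ' : {ℓ : Fin m // ℓ ≠ ℓ₀},
        MvPolynomial.X (Sum.inl ℓ') * MvPolynomial.X (Sum.inr (Sum.inl (ℓ', p.1)))
  else MvPolynomial.X (Sum.inr (Sum.inl (⟨p.2, h⟩, p.1)))

/-- An annihilating polynomial for `gPoly` (or `1` if the dimension count fails). -/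
noncomputable def relPoly (d m r n : ℕ) (ℓ₀ : Fin m) (I : Fin r → Finset (Fin d)) :
    MvPolynomial ((Fin d → Fin n) × Fin m) k₀ :=
  if h : Fintype.card (PParam d m r n ℓ₀ I) < Fintype.card ((Fin d → Fin n) × Fin m) then
    Classical.choose (pf_exists_annihilator h (gPoly k₀ d m r n ℓ₀ I))
  else 1

theorem relPoly_ne_zero (d m r n : ℕ) (ℓ₀ : Fin m) (I : Fin r → Finset (Fin d)) :
    relPoly k₀ d m r n ℓ₀ I ≠ 0 := by
  rw [relPoly]; split
  · exact (Classical.choose_spec (pf_exists_annihilator ‹_› (gPoly k₀ d m r n ℓ₀ I))).1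
  · exact one_ne_zero

theorem relPoly_aeval (d m r n : ℕ) (ℓ₀ : Fin m) (I : Fin r → Finset (Fin d))
    (h : Fintype.card (PParam d m r n ℓ₀ I) < Fintype.card ((Fin d → Fin n) × Fin m)) :
    MvPolynomial.aeval (gPoly k₀ d m r n ℓ₀ I) (relPoly k₀ d m r n ℓ₀ I) = 0 := by
  rw [relPoly, dif_pos h]
  exact (Classical.choose_spec (pf_exists_annihilator h (gPoly k₀ d m r n ℓ₀ I))).2

end ParamSec

theorem pf_pow_card_bound {n d c : ℕ} (hn : 0 < n) (h1 : 1 ≤ c) (h2 : c ≤ d - 1) (hd : 2 ≤ d) :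
    n ^ c + n ^ (d - c) ≤ n ^ (d - 1) + n := by
  have hx : 1 ≤ n ^ (c - 1) := Nat.one_le_pow _ _ hn
  have hy : n ≤ n ^ (d - c) := Nat.le_self_pow (by omega) n
  have e1 : n ^ c = n * n ^ (c - 1) := by
    rw [← pow_succ']; congr 1; omega
  have e2 : n ^ (d - 1) = n ^ (c - 1) * n ^ (d - c) := by
    rw [← pow_add]; congr 1; omega
  rw [e1, e2]
  obtain ⟨x, hxe⟩ : ∃ x, n ^ (c - 1) = x + 1 := ⟨n ^ (c - 1) - 1, by omega⟩
  obtain ⟨y, hye⟩ : ∃ y, n ^ (d - c) = y + n := ⟨n ^ (d - c) - n, by omega⟩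
  rw [hxe, hye]
  nlinarith [Nat.zero_le (x * y)]
set_option synthInstance.maxHeartbeats 1000000
set_option maxHeartbeats 2000000

/-- Let `K̄` be an algebraically closed field, `d ≥ 2`, `m ≥ 1`, `r ≥ 0`,
and `n > 0` with `n^d > m² + r·(n^(d-1) + n)`. Then there exists a nonzero polynomial, with
coefficients in the prime field of `K̄`, in the `m·n^d` standard coordinates on
`((K̄ⁿ)^{⊗d})^m`, vanishing at every `m`-tuple of collective partition rank at most `r`.
In particular, the set of such tuples is not Zariski dense. -/
theorem exists_equation_vanishing_on_low_collectivePrk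
    (Kbar : Type*) [Field Kbar] [IsAlgClosed Kbar] (d m r n : ℕ)
    (hd : 2 ≤ d) (hm : 1 ≤ m) (hn : 0 < n)
    (hineq : m ^ 2 + r * (n ^ (d - 1) + n) < n ^ d) :
    ∃ P : MvPolynomial ((Fin d → Fin n) × Fin m) Kbar, P ≠ 0 ∧
      (∀ mo : ((Fin d → Fin n) × Fin m) →₀ ℕ,
        MvPolynomial.coeff mo P ∈ (⊥ : Subfield Kbar)) ∧
      (∀ t : Fin m → ⨂[Kbar] _ : Fin d, (Fin n → Kbar),
        CollectivePrkDecomp Kbar (fun _ : Fin d => Fin n → Kbar) t r →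
          MvPolynomial.eval (fun p => stdCoord Kbar d n p.1 (t p.2)) P = 0) ∧
      ¬ (∀ x : Fin m → ⨂[Kbar] _ : Fin d, (Fin n → Kbar),
          MemZariskiClosure Kbar
            {t : Fin m → ⨂[Kbar] _ : Fin d, (Fin n → Kbar) |
              CollectivePrkDecomp Kbar (fun _ : Fin d => Fin n → Kbar) t r} x) := by
  classical
  set φ : (⊥ : Subfield Kbar) →+* Kbar := (⊥ : Subfield Kbar).subtype with hφdef
  set P₀ : MvPolynomial ((Fin d → Fin n) × Fin m) (⊥ : Subfield Kbar) :=
    ∏ ℓ₀ : Fin m, ∏ I : Fin r → Finset (Fin d), relPoly (⊥ : Subfield Kbar) d m r n ℓ₀ I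
    with hP₀
  have hP0ne : P₀ ≠ 0 := by
    rw [hP₀]
    exact Finset.prod_ne_zero_iff.mpr fun ℓ₀ _ => Finset.prod_ne_zero_iff.mpr fun I _ =>
      relPoly_ne_zero _ d m r n ℓ₀ I
  have hPne : MvPolynomial.map φ P₀ ≠ 0 := by
    intro h
    exact hP0ne (MvPolynomial.map_injective φ Subtype.val_injective (by simpa using h))
  -- the vanishing statement
  have hvanish : ∀ t : Fin m → ⨂[Kbar] _ : Fin d, (Fin n → Kbar),
      CollectivePrkDecomp Kbar (fun _ : Fin d => Fin n → Kbar) t r →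
      MvPolynomial.eval (fun p => stdCoord Kbar d n p.1 (t p.2))
        (MvPolynomial.map φ P₀) = 0 := by
    rintro t ⟨c, hc, I, hI, a, b, hsum⟩
    obtain ⟨ℓ₀, hcl⟩ := Function.ne_iff.mp hc
    have hcl' : c ℓ₀ ≠ 0 := by simpa using hcl
    set u : Kbar := (c ℓ₀)⁻¹ with hu
    set c' : Fin m → Kbar := fun ℓ => u * c ℓ with hc'
    set a' : ∀ kk, ⨂[Kbar] i : {x : Fin d // x ∈ I kk}, (Fin n → Kbar) :=
      fun kk => u • a kk with ha'
    have hsum' : ∑ ℓ, c' ℓ • t ℓ =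
        ∑ kk, partMul Kbar (fun _ : Fin d => Fin n → Kbar) (I kk) (a' kk) (b kk) := by
      have h1 : ∑ ℓ, c' ℓ • t ℓ = u • ∑ ℓ, c ℓ • t ℓ := by
        rw [Finset.smul_sum]
        exact Finset.sum_congr rfl fun ℓ _ => (smul_smul u (c ℓ) (t ℓ)).symm
      rw [h1, hsum, Finset.smul_sum]
      refine Finset.sum_congr rfl fun kk _ => ?_
      rw [ha', map_smul, LinearMap.smul_apply]
    have hc'1 : c' ℓ₀ = 1 := inv_mul_cancel₀ hcl'
    -- the dimension count
    have hcard : Fintype.card (PParam d m r n ℓ₀ I) <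
        Fintype.card ((Fin d → Fin n) × Fin m) := by
      have hA : Fintype.card ((Fin d → Fin n) × Fin m) = n ^ d * m := by
        simp [Fintype.card_fun]
      have hsubc : Fintype.card {ℓ : Fin m // ℓ ≠ ℓ₀} = m - 1 := by
        rw [Fintype.card_subtype_compl, Fintype.card_subtype_eq, Fintype.card_fin]
      have hmem : ∀ kk, Fintype.card {x : Fin d // x ∈ I kk} = (I kk).card := by
        intro kk
        rw [Fintype.card_congr (Equiv.refl {x : Fin d // x ∈ I kk} :
          {x : Fin d // x ∈ I kk} ≃ ((I kk) : Finset (Fin d)))]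
        exact Fintype.card_coe _
      have hnotmem : ∀ kk, Fintype.card {x : Fin d // x ∉ I kk} = d - (I kk).card := by
        intro kk
        rw [Fintype.card_subtype_compl, Fintype.card_fin, hmem kk]
      have hPP : Fintype.card (PParam d m r n ℓ₀ I) =
          (m - 1) + ((m - 1) * n ^ d +
            ((∑ kk, n ^ (I kk).card) + ∑ kk, n ^ (d - (I kk).card))) := by
        rw [show Fintype.card (PParam d m r n ℓ₀ I) =
            Fintype.card ({ℓ : Fin m // ℓ ≠ ℓ₀} ⊕ (({ℓ : Fin m // ℓ ≠ ℓ₀} × (Fin d → Fin n)) ⊕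
              ((Σ kk : Fin r, ({x : Fin d // x ∈ I kk} → Fin n)) ⊕
               (Σ kk : Fin r, ({x : Fin d // x ∉ I kk} → Fin n)))))
          from Fintype.card_congr (Equiv.refl _)]
        simp only [Fintype.card_sum, Fintype.card_prod, Fintype.card_sigma,
          Fintype.card_fun, Fintype.card_fin, hsubc, hmem, hnotmem]
      have hkb : ∀ kk : Fin r, n ^ (I kk).card + n ^ (d - (I kk).card) ≤ n ^ (d - 1) + n := by
        intro kk
        have h1 : 1 ≤ (I kk).card := Finset.card_pos.mpr (hI kk).1
        have h2 : (I kk).card ≤ d - 1 := by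
          have h3 := Finset.card_lt_card (Finset.ssubset_univ_iff.mpr (hI kk).2)
          rw [Finset.card_univ, Fintype.card_fin] at h3
          omega
        exact pf_pow_card_bound hn h1 h2 hd
      have hsumb : (∑ kk, n ^ (I kk).card) + (∑ kk, n ^ (d - (I kk).card)) ≤
          r * (n ^ (d - 1) + n) := by
        rw [← Finset.sum_add_distrib]
        calc ∑ kk, (n ^ (I kk).card + n ^ (d - (I kk).card))
            ≤ ∑ _kk : Fin r, (n ^ (d - 1) + n) := Finset.sum_le_sum fun kk _ => hkb kk
          _ = r * (n ^ (d - 1) + n) := by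
              rw [Finset.sum_const, Finset.card_univ, Fintype.card_fin, smul_eq_mul]
      rw [hPP, hA]
      obtain ⟨m', rfl⟩ : ∃ m', m = m' + 1 := ⟨m - 1, by omega⟩
      have hm2 : m' + 1 ≤ (m' + 1) ^ 2 := Nat.le_self_pow two_ne_zero _
      have h5 : (m' + 1 - 1) + ((∑ kk, n ^ (I kk).card) + ∑ kk, n ^ (d - (I kk).card)) <
          n ^ d := by
        simp only [Nat.add_sub_cancel]
        linarith [hsumb, hineq, hm2]
      have hgoal : (m' + 1 - 1) + ((m' + 1 - 1) * n ^ d +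
          ((∑ kk, n ^ (I kk).card) + ∑ kk, n ^ (d - (I kk).card))) < n ^ d * (m' + 1) := by
        have h6 : n ^ d * (m' + 1) = n ^ d * m' + n ^ d := by ring
        have h7 : (m' + 1 - 1) * n ^ d = m' * n ^ d := by simp
        rw [h6, h7]
        have h8 : m' * n ^ d = n ^ d * m' := by ring
        omega
      exact hgoal
    -- the evaluation point in parameter space
    let θ : PParam d m r n ℓ₀ I → Kbar := fun q =>
      match q with
      | Sum.inl ℓ' => c' ℓ'.1
      | Sum.inr (Sum.inl q2) => coordT Kbar n q2.2 (t q2.1.1)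
      | Sum.inr (Sum.inr (Sum.inl q3)) => coordT Kbar n q3.2 (a' q3.1)
      | Sum.inr (Sum.inr (Sum.inr q4)) => coordT Kbar n q4.2 (b q4.1)
    have hgev : ∀ p : (Fin d → Fin n) × Fin m,
        MvPolynomial.eval₂ φ θ (gPoly (⊥ : Subfield Kbar) d m r n ℓ₀ I p) =
          stdCoord Kbar d n p.1 (t p.2) := by
      rintro ⟨w, ℓ⟩
      rw [stdCoord_eq_coordT]
      by_cases h : ℓ = ℓ₀
      · subst h
        rw [show MvPolynomial.eval₂ φ θ (gPoly (⊥ : Subfield Kbar) d m r n ℓ I (w, ℓ)) =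
            MvPolynomial.eval₂ φ θ ((∑ kk : Fin r,
              MvPolynomial.X (σ := PParam d m r n ℓ I) (Sum.inr (Sum.inr (Sum.inl ⟨kk, fun i => w i⟩))) *
                MvPolynomial.X (σ := PParam d m r n ℓ I) (Sum.inr (Sum.inr (Sum.inr ⟨kk, fun i => w i⟩)))) -
            ∑ ℓ' : {ℓv : Fin m // ℓv ≠ ℓ},
              MvPolynomial.X (σ := PParam d m r n ℓ I) (Sum.inl ℓ') * MvPolynomial.X (σ := PParam d m r n ℓ I) (Sum.inr (Sum.inl (ℓ', w))))
          from congrArg (MvPolynomial.eval₂ φ θ) (dif_pos rfl)]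
        rw [← MvPolynomial.coe_eval₂Hom, _root_.map_sub, _root_.map_sum, _root_.map_sum]
        have hX : ∀ q : {ℓv : Fin m // ℓv ≠ ℓ} ⊕ (({ℓv : Fin m // ℓv ≠ ℓ} × (Fin d → Fin n)) ⊕
            ((Σ kk : Fin r, ({x : Fin d // x ∈ I kk} → Fin n)) ⊕
             (Σ kk : Fin r, ({x : Fin d // x ∉ I kk} → Fin n)))),
            MvPolynomial.eval₂Hom φ θ (MvPolynomial.X (σ := PParam d m r n ℓ I) q) = θ q :=
          fun q => MvPolynomial.eval₂Hom_X' _ _ _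
        simp only [_root_.map_mul, hX]
        have e1 : ∀ kk : Fin r, θ (Sum.inr (Sum.inr (Sum.inl ⟨kk, fun i => w i⟩))) *
            θ (Sum.inr (Sum.inr (Sum.inr ⟨kk, fun i => w i⟩))) =
            coordT Kbar n w
              (partMul Kbar (fun _ : Fin d => Fin n → Kbar) (I kk) (a' kk) (b kk)) := by
          intro kk
          rw [coordT_partMul]
        rw [Finset.sum_congr rfl fun kk _ => e1 kk, ← _root_.map_sum, ← hsum', _root_.map_sum]
        have e2 : ∀ ℓv : Fin m, coordT Kbar n w (c' ℓv • t ℓv) =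
            c' ℓv * coordT Kbar n w (t ℓv) := fun ℓv => by rw [map_smul, smul_eq_mul]
        rw [Finset.sum_congr rfl fun ℓv _ => e2 ℓv]
        have e3 : ∑ ℓv : Fin m, c' ℓv * coordT Kbar n w (t ℓv) =
            c' ℓ * coordT Kbar n w (t ℓ) +
              ∑ ℓ' : {ℓv : Fin m // ℓv ≠ ℓ}, c' ℓ'.1 * coordT Kbar n w (t ℓ'.1) := by
          rw [← Finset.add_sum_erase Finset.univ _ (Finset.mem_univ ℓ)]
          congr 1
          exact Finset.sum_subtype (p := fun ℓv => ℓv ≠ ℓ) (Finset.univ.erase ℓ)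
            (fun x => by simp [Finset.mem_erase]) _
        have e4 : ∀ ℓ' : {ℓv : Fin m // ℓv ≠ ℓ},
            θ (Sum.inl ℓ') * θ (Sum.inr (Sum.inl (ℓ', w))) =
              c' ℓ'.1 * coordT Kbar n w (t ℓ'.1) := fun _ => rfl
        rw [Finset.sum_congr rfl fun ℓ' _ => e4 ℓ', e3, hc'1, one_mul]
        ring
      · rw [show MvPolynomial.eval₂ φ θ (gPoly (⊥ : Subfield Kbar) d m r n ℓ₀ I (w, ℓ)) =
            MvPolynomial.eval₂ φ θ (MvPolynomial.X (Sum.inr (Sum.inl (⟨ℓ, h⟩, w))))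
              from congrArg (MvPolynomial.eval₂ φ θ) (dif_neg h)]
        exact MvPolynomial.eval₂_X _ _ _
    -- the factor corresponding to (ℓ₀, I) vanishes
    have hfac : MvPolynomial.eval (fun p => stdCoord Kbar d n p.1 (t p.2))
        (MvPolynomial.map φ (relPoly (⊥ : Subfield Kbar) d m r n ℓ₀ I)) = 0 := by
      rw [MvPolynomial.eval_map]
      have hφC : (MvPolynomial.eval₂Hom φ θ).comp
          (MvPolynomial.C : (⊥ : Subfield Kbar) →+* MvPolynomial (PParam d m r n ℓ₀ I)
            (⊥ : Subfield Kbar)) = φ := by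
        ext x
        simp
      have hcl2 := MvPolynomial.eval₂_comp_left (MvPolynomial.eval₂Hom φ θ)
        (MvPolynomial.C) (gPoly (⊥ : Subfield Kbar) d m r n ℓ₀ I)
        (relPoly (⊥ : Subfield Kbar) d m r n ℓ₀ I)
      rw [hφC] at hcl2
      have hev2 : (fun p => stdCoord Kbar d n p.1 (t p.2)) =
          ((MvPolynomial.eval₂Hom φ θ) ∘ (gPoly (⊥ : Subfield Kbar) d m r n ℓ₀ I)) := by
        funext p
        rw [Function.comp_apply, MvPolynomial.coe_eval₂Hom, hgev p]
      rw [hev2, ← hcl2]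
      have hev3 : MvPolynomial.eval₂ MvPolynomial.C
          (gPoly (⊥ : Subfield Kbar) d m r n ℓ₀ I)
          (relPoly (⊥ : Subfield Kbar) d m r n ℓ₀ I) =
          MvPolynomial.aeval (gPoly (⊥ : Subfield Kbar) d m r n ℓ₀ I)
            (relPoly (⊥ : Subfield Kbar) d m r n ℓ₀ I) := by
        rw [MvPolynomial.aeval_def, MvPolynomial.algebraMap_eq]
      rw [hev3, relPoly_aeval _ d m r n ℓ₀ I hcard, map_zero]
    -- conclude using the product structure
    have hprod : MvPolynomial.eval (fun p => stdCoord Kbar d n p.1 (t p.2))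
        (MvPolynomial.map φ P₀) =
        ∏ ℓ₀' : Fin m, ∏ I' : Fin r → Finset (Fin d),
          MvPolynomial.eval (fun p => stdCoord Kbar d n p.1 (t p.2))
            (MvPolynomial.map φ (relPoly (⊥ : Subfield Kbar) d m r n ℓ₀' I')) := by
      rw [hP₀, map_prod, map_prod]
      exact Finset.prod_congr rfl fun ℓ₀' _ => by rw [map_prod, map_prod]
    rw [hprod]
    refine Finset.prod_eq_zero (Finset.mem_univ ℓ₀) ?_
    exact Finset.prod_eq_zero (Finset.mem_univ I) hfac
  refine ⟨MvPolynomial.map φ P₀, hPne, ?_, hvanish, ?_⟩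
  · intro mo
    rw [MvPolynomial.coeff_map]
    exact (MvPolynomial.coeff mo P₀).2
  · intro hall
    apply hPne
    apply MvPolynomial.funext (R := Kbar)
    intro y
    rw [_root_.map_zero (MvPolynomial.eval y)]
    set x : Fin m → ⨂[Kbar] _ : Fin d, (Fin n → Kbar) := fun ℓ =>
      ∑ w : Fin d → Fin n, y (w, ℓ) •
        tprod Kbar (fun i => (Pi.single (w i) 1 : Fin n → Kbar)) with hx
    have hxc : ∀ p : (Fin d → Fin n) × Fin m, stdCoord Kbar d n p.1 (x p.2) = y p := by
      rintro ⟨w, ℓ⟩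
      rw [stdCoord_eq_coordT, hx]
      rw [map_sum]
      rw [Finset.sum_congr rfl fun w' (_ : w' ∈ Finset.univ) => by
        rw [map_smul, coordT_tprod_single, smul_eq_mul]]
      simp only [mul_ite, mul_one, mul_zero]
      simp
    let eσ : ((Fin d → Fin n) × Fin m) ≃ Fin (Fintype.card ((Fin d → Fin n) × Fin m)) :=
      Fintype.equivFin _
    let φL : (Fin m → ⨂[Kbar] _ : Fin d, (Fin n → Kbar)) →ₗ[Kbar]
        (Fin (Fintype.card ((Fin d → Fin n) × Fin m)) → Kbar) :=
      LinearMap.pi (fun j => (stdCoord Kbar d n (eσ.symm j).1).comp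
        (LinearMap.proj (eσ.symm j).2))
    have hcomp : ∀ s : Fin m → ⨂[Kbar] _ : Fin d, (Fin n → Kbar),
        (φL s) ∘ eσ = fun p => stdCoord Kbar d n p.1 (s p.2) := by
      intro s
      funext p
      simp only [Function.comp_apply, φL, LinearMap.pi_apply, LinearMap.coe_comp,
        LinearMap.proj_apply, Equiv.symm_apply_apply]
    have hS : ∀ s ∈ {tt : Fin m → ⨂[Kbar] _ : Fin d, (Fin n → Kbar) |
        CollectivePrkDecomp Kbar (fun _ : Fin d => Fin n → Kbar) tt r},
        MvPolynomial.eval (φL s) (MvPolynomial.rename eσ (MvPolynomial.map φ P₀)) = 0 := by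
      intro s hs
      rw [MvPolynomial.eval_rename, hcomp s]
      exact hvanish s hs
    have hx0 := hall x (Fintype.card ((Fin d → Fin n) × Fin m)) φL
      (MvPolynomial.rename eσ (MvPolynomial.map φ P₀)) hS
    rw [MvPolynomial.eval_rename, hcomp x] at hx0
    rw [show (fun p => stdCoord Kbar d n p.1 (x p.2)) = y from funext hxc] at hx0
    exact hx0
end
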